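/- arXiv:2303.04493 — 7 statements merged into one kernel-verified Lean document; each statement's English description precedes it below -/
import Mathlib

section
/- Let G be a group and ω a 3-cocycle on G with values in k^×. Then for all h, g, g', g'' ∈ G the identity γ(h)(gg',g'')·γ(h)(g,g') / ω(hgh⁻¹,hg'h⁻¹,hg''h⁻¹) = γ(h)(g,g'g'')·γ(h)(g',g'') / ω(g,g',g'') holds. -/
namespace DW

variable {G : Type*} [Group G] {M : Type*} [CommGroup M]

/-- The 3-cocycle condition for a function `ω : G³ → M` (`M` an abelian group, e.g. `kˣ`). -/
def IsCocycle (ω : G → G → G → M) : Prop :=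
  ∀ a b c d : G, ω (a * b) c d * ω a b (c * d) = ω a b c * ω a (b * c) d * ω b c d

/-- `τ(h,k)(d) = ω(h,k,d)·ω(hkd(hk)⁻¹,h,k)/ω(h,kdk⁻¹,k)`. -/
def tauc (ω : G → G → G → M) (h k d : G) : M :=
  ω h k d * ω (h * k * d * (h * k)⁻¹) h k * (ω h (k * d * k⁻¹) k)⁻¹

/-- `γ(h)(d,f) = ω(h,d,f)·ω(hdh⁻¹,hfh⁻¹,h)/ω(hdh⁻¹,h,f)`. -/
def gamc (ω : G → G → G → M) (h d f : G) : M :=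
  ω h d f * ω (h * d * h⁻¹) (h * f * h⁻¹) h * (ω (h * d * h⁻¹) h f)⁻¹

end DW

open DW

/-- Lemma A.2: for a 3-cocycle `ω` on `G` with values in `k^×`,
`γ(h)(gg',g'')·γ(h)(g,g') / ω(hgh⁻¹,hg'h⁻¹,hg''h⁻¹) = γ(h)(g,g'g'')·γ(h)(g',g'') / ω(g,g',g'')`. -/
theorem gamma_cocycle_identity {G : Type*} [Group G] {M : Type*} [CommGroup M]
    (ω : G → G → G → M) (hω : IsCocycle ω) :
    ∀ h g g' g'' : G,
      gamc ω h (g * g') g'' * gamc ω h g g'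
          * (ω (h * g * h⁻¹) (h * g' * h⁻¹) (h * g'' * h⁻¹))⁻¹
        = gamc ω h g (g' * g'') * gamc ω h g' g'' * (ω g g' g'')⁻¹ := by

  intro h g g' g''
  have eA := hω h g g' g''
  have eB := hω (h * g * h⁻¹) h g' g''
  have eC := hω (h * g * h⁻¹) (h * g' * h⁻¹) h g''
  have eD := hω (h * g * h⁻¹) (h * g' * h⁻¹) (h * g'' * h⁻¹) h
  simp only [gamc, mul_assoc, mul_inv_cancel_left, inv_mul_cancel_left, inv_mul_cancel,
    mul_inv_cancel, mul_one] at eA eB eC eD ⊢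
  have h8 : ω h g (g' * g'')
      = (ω (h * g) g' g'')⁻¹ * (ω h g g' * (ω h (g * g') g'' * ω g g' g'')) := by
    rw [← eA]; group
  have h10 : ω (h * (g * h⁻¹)) h (g' * g'')
      = (ω (h * g) g' g'')⁻¹ * (ω (h * (g * h⁻¹)) h g'
          * (ω (h * (g * h⁻¹)) (h * g') g'' * ω h g' g'')) := by
    rw [← eB]; group
  have h3 : ω (h * (g * (g' * h⁻¹))) h g''
      = (ω (h * (g * h⁻¹)) (h * (g' * h⁻¹)) (h * g''))⁻¹
          * (ω (h * (g * h⁻¹)) (h * (g' * h⁻¹)) h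
            * (ω (h * (g * h⁻¹)) (h * g') g'' * ω (h * (g' * h⁻¹)) h g'')) := by
    rw [← eC]; simp [mul_comm, mul_left_comm, mul_assoc]
  have h2 : ω (h * (g * (g' * h⁻¹))) (h * (g'' * h⁻¹)) h
      = (ω (h * (g * h⁻¹)) (h * (g' * h⁻¹)) (h * g''))⁻¹
          * (ω (h * (g * h⁻¹)) (h * (g' * h⁻¹)) (h * (g'' * h⁻¹))
            * (ω (h * (g * h⁻¹)) (h * (g' * (g'' * h⁻¹))) h
              * ω (h * (g' * h⁻¹)) (h * (g'' * h⁻¹)) h)) := by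
    rw [← eD]; simp [mul_comm, mul_left_comm, mul_assoc]
  rw [h2, h3, h8, h10]
  apply Additive.ofMul.injective
  simp only [ofMul_mul, ofMul_inv]
  abel
end

section
/- Let G be a group and ω a 3-cocycle on G with values in k^×. Then for all g, h, k ∈ G the identity γ(k)(g,h)·τ(kgk⁻¹,k)(h) = γ(k)(ghg⁻¹,g)·τ(k,g)(h) holds. -/
open DW

/-- Equation (2.12): for a 3-cocycle `ω` on `G` with values in `k^×`,
`γ(k)(g,h)·τ(kgk⁻¹,k)(h) = γ(k)(ghg⁻¹,g)·τ(k,g)(h)` for all `g,h,k ∈ G`. -/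
theorem gamma_braid_identity {G : Type*} [Group G] {M : Type*} [CommGroup M]
    (ω : G → G → G → M) (hω : IsCocycle ω) :
    ∀ g h k : G,
      gamc ω k g h * tauc ω (k * g * k⁻¹) k h = gamc ω k (g * h * g⁻¹) g * tauc ω k g h := by
  intro g h k
  simp only [gamc, tauc]
  rw [show k * g * k⁻¹ * k = k * g by group,
      show k * g * h * (k * g)⁻¹ = k * (g * h * g⁻¹) * k⁻¹ by group]
  simp [mul_comm, mul_left_comm, mul_assoc]
end

section
/- Let G be a group and ω a 3-cocycle on G with values in k^×. Then for all d, f ∈ G the identity γ(df)(d,f) = τ(dfd⁻¹,d)(d)·τ(d,f)(f) holds; equivalently, it is equal to the 3-cocycle condition for ω evaluated at the quadruple (dfdf⁻¹d⁻¹, dfd⁻¹, d, f). -/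
open DW

private lemma helper {M : Type*} [CommGroup M] (a b c p e X Y : M)
    (h : a * b = c * (p * e)) :
    a * (b * p⁻¹) = X * (c * (X⁻¹ * (Y * (e * Y⁻¹)))) := by
  rw [← mul_assoc, h]
  simp [mul_comm, mul_left_comm, mul_assoc]

/-- for a 3-cocycle `ω` on `G` with values in `k^×`,
`γ(df)(d,f) = τ(dfd⁻¹,d)(d)·τ(d,f)(f)` for all `d,f ∈ G`; moreover this identity is
equivalent to the 3-cocycle condition for `ω` evaluated at the quadruple
`(dfdf⁻¹d⁻¹, dfd⁻¹, d, f)`. -/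
theorem gamma_twist_identity {G : Type*} [Group G] {M : Type*} [CommGroup M]
    (ω : G → G → G → M) (hω : IsCocycle ω) :
    (∀ d f : G, gamc ω (d * f) d f = tauc ω (d * f * d⁻¹) d d * tauc ω d f f) ∧
    ∀ d f : G,
      (gamc ω (d * f) d f = tauc ω (d * f * d⁻¹) d d * tauc ω d f f) ↔
        (ω ((d * f * d * f⁻¹ * d⁻¹) * (d * f * d⁻¹)) d f
            * ω (d * f * d * f⁻¹ * d⁻¹) (d * f * d⁻¹) (d * f)
          = ω (d * f * d * f⁻¹ * d⁻¹) (d * f * d⁻¹) d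
            * ω (d * f * d * f⁻¹ * d⁻¹) ((d * f * d⁻¹) * d) f
            * ω (d * f * d⁻¹) d f) := by
  have main : ∀ d f : G, gamc ω (d * f) d f = tauc ω (d * f * d⁻¹) d d * tauc ω d f f := by
    intro d f
    have key := hω (d * f * d * f⁻¹ * d⁻¹) (d * f * d⁻¹) d f
    simp only [gamc, tauc, mul_inv_rev, mul_assoc, inv_mul_cancel_left, mul_inv_cancel_left,
      inv_mul_cancel, mul_inv_cancel, mul_one, one_mul] at key ⊢
    exact helper _ _ _ _ _ _ _ key
  refine ⟨main, fun d f => iff_of_true (main d f) ?_⟩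
  exact hω (d * f * d * f⁻¹ * d⁻¹) (d * f * d⁻¹) d f
end

section
/- The maps θ_V : V → V defined on each twisted Yetter–Drinfeld module V over (G,ω) by θ_V(v_d) = d·v_d for v_d ∈ V_d form a ribbon twist on the braided monoidal category Z(Vect_G^ω): each θ_V is a natural isomorphism of twisted Yetter–Drinfeld modules, θ_{V⊗W} = (θ_V⊗θ_W)∘c_{W,V}∘c_{V,W} for all V, W, θ on the unit object is the identity, and θ is compatible with duals ((θ_V)^* = θ_{V^*}). -/
open scoped TensorProduct

namespace DW

/-! ### Cocycle combinatorics -/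

section Cocycle

variable {G : Type*} [Group G] {M : Type*} [CommGroup M]

/-- `ω` is normalized if it takes the value `1` whenever an argument is `1`. -/
def IsNormalized (ω : G → G → G → M) : Prop :=
  ∀ a b c : G, a = 1 ∨ b = 1 ∨ c = 1 → ω a b c = 1

end Cocycle

/-! ### Twisted Yetter–Drinfeld modules -/

/-- A twisted Yetter–Drinfeld module structure over `(G, ω)` on a `k`-vector space `M`:
a `G`-grading (given internally by submodules) together with a twisted `G`-action. -/
structure YDOn (k : Type*) [Field k] {G : Type*} [Group G] [DecidableEq G]
    (ω : G → G → G → kˣ) (M : Type*) [AddCommGroup M] [Module k M] where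
  grading : G → Submodule k M
  internal : DirectSum.IsInternal grading
  act : G → M →ₗ[k] M
  act_one : act 1 = LinearMap.id
  act_mem : ∀ (g d : G), ∀ v ∈ grading d, act g v ∈ grading (g * d * g⁻¹)
  act_act : ∀ (h g d : G), ∀ v ∈ grading d,
    act h (act g v) = ((tauc ω h g d : kˣ) : k) • act (h * g) v

section YD

variable {k : Type*} [Field k] {G : Type*} [Group G] [DecidableEq G] {ω : G → G → G → kˣ}

/-- Morphisms of twisted Yetter–Drinfeld modules: grading-preserving and `G`-equivariant. -/
def IsYDHom {M N : Type*} [AddCommGroup M] [Module k M] [AddCommGroup N] [Module k N]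
    (S : YDOn k ω M) (T : YDOn k ω N) (f : M →ₗ[k] N) : Prop :=
  (∀ d : G, ∀ v ∈ S.grading d, f v ∈ T.grading d) ∧
  ∀ g : G, f ∘ₗ S.act g = T.act g ∘ₗ f

/-- `θ` is the ribbon twist map, i.e. `θ(v_d) = d·v_d` on homogeneous elements. -/
def IsTwistMap {M : Type*} [AddCommGroup M] [Module k M] (S : YDOn k ω M)
    (θ : M →ₗ[k] M) : Prop :=
  ∀ d : G, ∀ v ∈ S.grading d, θ v = S.act d v

/-- `T` is the tensor-product Yetter–Drinfeld structure on `V ⊗ W`: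
grading `(V⊗W)_d = ⊕_{ab=d} V_a ⊗ W_b`, action `h·(v_a⊗w_b) = γ(h)(a,b) (h·v ⊗ h·w)`. -/
def IsTensorStruct {V W : Type*} [AddCommGroup V] [Module k V] [AddCommGroup W] [Module k W]
    (SV : YDOn k ω V) (SW : YDOn k ω W) (T : YDOn k ω (V ⊗[k] W)) : Prop :=
  (∀ d : G, T.grading d =
      ⨆ a : G, Submodule.map₂ (TensorProduct.mk k V W) (SV.grading a) (SW.grading (a⁻¹ * d))) ∧
  ∀ (h a b : G) (v : V) (w : W), v ∈ SV.grading a → w ∈ SW.grading b →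
    T.act h (v ⊗ₜ[k] w) = ((gamc ω h a b : kˣ) : k) • (SV.act h v ⊗ₜ[k] SW.act h w)

/-- `c` is the braiding `c_{V,W}(v_g ⊗ w) = (g·w) ⊗ v_g`. -/
def IsBraidingMap {V W : Type*} [AddCommGroup V] [Module k V] [AddCommGroup W] [Module k W]
    (SV : YDOn k ω V) (SW : YDOn k ω W) (c : V ⊗[k] W →ₗ[k] W ⊗[k] V) : Prop :=
  ∀ (g : G) (v : V) (w : W), v ∈ SV.grading g → c (v ⊗ₜ[k] w) = SW.act g w ⊗ₜ[k] v

/-- `a` is the associator `α((u_g⊗v_h)⊗w_l) = ω(g,h,l)⁻¹ u⊗(v⊗w)`. -/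
def IsAssocMap {U V W : Type*} [AddCommGroup U] [Module k U] [AddCommGroup V] [Module k V]
    [AddCommGroup W] [Module k W]
    (SU : YDOn k ω U) (SV : YDOn k ω V) (SW : YDOn k ω W)
    (a : (U ⊗[k] V) ⊗[k] W →ₗ[k] U ⊗[k] (V ⊗[k] W)) : Prop :=
  ∀ (g h l : G) (u : U) (v : V) (w : W),
    u ∈ SU.grading g → v ∈ SV.grading h → w ∈ SW.grading l →
    a ((u ⊗ₜ[k] v) ⊗ₜ[k] w) = (((ω g h l)⁻¹ : kˣ) : k) • (u ⊗ₜ[k] (v ⊗ₜ[k] w))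

/-- `a` is the inverse associator `α⁻¹(u_g⊗(v_h⊗w_l)) = ω(g,h,l) (u⊗v)⊗w`. -/
def IsAssocInvMap {U V W : Type*} [AddCommGroup U] [Module k U] [AddCommGroup V] [Module k V]
    [AddCommGroup W] [Module k W]
    (SU : YDOn k ω U) (SV : YDOn k ω V) (SW : YDOn k ω W)
    (a : U ⊗[k] (V ⊗[k] W) →ₗ[k] (U ⊗[k] V) ⊗[k] W) : Prop :=
  ∀ (g h l : G) (u : U) (v : V) (w : W),
    u ∈ SU.grading g → v ∈ SV.grading h → w ∈ SW.grading l →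
    a (u ⊗ₜ[k] (v ⊗ₜ[k] w)) = ((ω g h l : kˣ) : k) • ((u ⊗ₜ[k] v) ⊗ₜ[k] w)

/-- The unit object: `k` concentrated in degree `1` with trivial action. -/
def IsUnitStruct (S : YDOn k ω k) : Prop :=
  S.grading 1 = ⊤ ∧ (∀ d : G, d ≠ 1 → S.grading d = ⊥) ∧ ∀ g : G, S.act g = LinearMap.id

end YD

/-! ### The induction functor -/

section Induced

variable {k : Type*} [Field k] {G : Type*} [Group G] [DecidableEq G]
variable (ω : G → G → G → kˣ) (H : Subgroup G)

/-- Restriction of a 3-cocycle on `G` to a subgroup `H`. -/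
def resCocycle : ↥H → ↥H → ↥H → kˣ := fun a b c => ω ↑a ↑b ↑c

variable {V : Type*} [AddCommGroup V] [Module k V]

/-- The relations `g h ⊗ v_d = τ(g,h)(d)⁻¹ g ⊗ (h·v_d)` defining `I(V) = kG ⊗_{kH} V`. -/
noncomputable def indRel (S : YDOn k (resCocycle ω H) V) : Submodule k (G →₀ V) :=
  Submodule.span k
    {x | ∃ (g : G) (h d : ↥H) (v : V), v ∈ S.grading d ∧
      x = Finsupp.single (g * ↑h) v
        - (((tauc ω g ↑h ↑d)⁻¹ : kˣ) : k) • Finsupp.single g (S.act h v)}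

/-- The carrier of the induced module `I(V)`. -/
abbrev IndCarrier (S : YDOn k (resCocycle ω H) V) : Type _ :=
  (G →₀ V) ⧸ indRel ω H S

/-- The generator `g ⊗ v` of `I(V)`. -/
noncomputable def jgen (S : YDOn k (resCocycle ω H) V) (g : G) (v : V) : IndCarrier ω H S :=
  Submodule.Quotient.mk (Finsupp.single g v)

/-- `T` is the twisted Yetter–Drinfeld structure of the induced module `I(V)`:
`deg (g⊗v_e) = g e g⁻¹` and `c ⊳ (g⊗v_e) = τ(c,g)(e) (cg ⊗ v_e)`. -/
def IsIndStruct (S : YDOn k (resCocycle ω H) V) (T : YDOn k ω (IndCarrier ω H S)) : Prop :=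
  (∀ d : G, T.grading d = Submodule.span k
      {x | ∃ (g : G) (e : ↥H) (v : V), v ∈ S.grading e ∧ g * ↑e * g⁻¹ = d ∧
        x = jgen ω H S g v}) ∧
  ∀ (c g : G) (e : ↥H) (v : V), v ∈ S.grading e →
    T.act c (jgen ω H S g v) = ((tauc ω c g ↑e : kˣ) : k) • jgen ω H S (c * g) v

/-- `F` is the induced morphism `I(f)` of a morphism `f`. -/
def IsIndMap {W : Type*} [AddCommGroup W] [Module k W]
    (S : YDOn k (resCocycle ω H) V) (S' : YDOn k (resCocycle ω H) W)
    (f : V →ₗ[k] W) (F : IndCarrier ω H S →ₗ[k] IndCarrier ω H S') : Prop :=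
  ∀ (g : G) (v : V), F (jgen ω H S g v) = jgen ω H S' g (f v)

/-- `ν` is the oplax structure map
`ν(g ⊗ (a_d ⊗ b_f)) = γ(g)(d,f) (g⊗a) ⊗ (g⊗b)`. -/
def IsNuMap {A B : Type*} [AddCommGroup A] [Module k A] [AddCommGroup B] [Module k B]
    (SA : YDOn k (resCocycle ω H) A) (SB : YDOn k (resCocycle ω H) B)
    (SAB : YDOn k (resCocycle ω H) (A ⊗[k] B))
    (ν : IndCarrier ω H SAB →ₗ[k] IndCarrier ω H SA ⊗[k] IndCarrier ω H SB) : Prop :=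
  ∀ (g : G) (d f : ↥H) (a : A) (b : B), a ∈ SA.grading d → b ∈ SB.grading f →
    ν (jgen ω H SAB g (a ⊗ₜ[k] b)) =
      ((gamc ω g ↑d ↑f : kˣ) : k) • (jgen ω H SA g a ⊗ₜ[k] jgen ω H SB g b)

/-- `μ` is the lax structure map: zero across distinct cosets and
`μ((g⊗a_d) ⊗ (g⊗b_f)) = γ(g)(d,f)⁻¹ (g ⊗ (a⊗b))`. -/
def IsMuMap {A B : Type*} [AddCommGroup A] [Module k A] [AddCommGroup B] [Module k B]
    (SA : YDOn k (resCocycle ω H) A) (SB : YDOn k (resCocycle ω H) B)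
    (SAB : YDOn k (resCocycle ω H) (A ⊗[k] B))
    (μ : IndCarrier ω H SA ⊗[k] IndCarrier ω H SB →ₗ[k] IndCarrier ω H SAB) : Prop :=
  (∀ g g' : G, g⁻¹ * g' ∉ H → ∀ (a : A) (b : B),
      μ (jgen ω H SA g a ⊗ₜ[k] jgen ω H SB g' b) = 0) ∧
  ∀ (g : G) (d f : ↥H) (a : A) (b : B), a ∈ SA.grading d → b ∈ SB.grading f →
    μ (jgen ω H SA g a ⊗ₜ[k] jgen ω H SB g b) =
      (((gamc ω g ↑d ↑f)⁻¹ : kˣ) : k) • jgen ω H SAB g (a ⊗ₜ[k] b)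

/-- The counit `I(1) → 1`, `g ⊗ c ↦ c`. -/
def IsCounitMap (S1 : YDOn k (resCocycle ω H) k)
    (ε : IndCarrier ω H S1 →ₗ[k] k) : Prop :=
  ∀ (g : G) (c : k), ε (jgen ω H S1 g c) = c

/-- The unit `1 → I(1)`, `1 ↦ ∑ᵢ gᵢ ⊗ 1` over a set `R` of left coset representatives. -/
def IsUnitMap (S1 : YDOn k (resCocycle ω H) k) (R : Finset G)
    (η : k →ₗ[k] IndCarrier ω H S1) : Prop :=
  (∀ g : G, ∃! r, r ∈ R ∧ g⁻¹ * r ∈ H) ∧ η 1 = ∑ r ∈ R, jgen ω H S1 r (1 : k)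

end Induced

/-! ### The coset algebra and classification data -/

section AH

variable (k : Type*) [Field k] {G : Type*} [Group G]

/-- The twisted action of `G` on functions on `G/H` : `(c·f)(x) = f(c⁻¹x)`. -/
def cosetAct (H : Subgroup G) (c : G) : ((G ⧸ H) → k) →ₗ[k] ((G ⧸ H) → k) :=
  LinearMap.funLeft k k fun x => c⁻¹ • x

/-- Basis element `e_n` of the twisted group algebra `B(N,κ,ε)`. -/
noncomputable def bGen {H : Type*} [Group H] (N : Subgroup H) (n : ↥N) : ↥N →₀ k :=
  Finsupp.single n 1

end AH

section ClassData

variable {H : Type*} [Group H] {M : Type*} [CommGroup M]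

/-- The conditions on the classification data `(N, κ, ε)` from Davydov–Simmons. -/
def ClassData (ω : H → H → H → M) (N : Subgroup H) (κ ε : H → H → M) : Prop :=
  (∀ n ∈ N, κ n 1 = 1 ∧ κ 1 n = 1) ∧
  (∀ n ∈ N, ∀ m ∈ N, ∀ l ∈ N,
      ω n m l = κ n m * (κ m l)⁻¹ * κ (n * m) l * (κ n (m * l))⁻¹) ∧
  (∀ h g : H, ∀ n ∈ N, tauc ω h g n = ε h (g * n * g⁻¹) * ε g n * (ε (h * g) n)⁻¹) ∧
  (∀ h : H, ∀ n ∈ N, ∀ m ∈ N,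
      gamc ω h n m
        = ε h (n * m) * (ε h n)⁻¹ * (ε h m)⁻¹ * κ (h * n * h⁻¹) (h * m * h⁻¹) * (κ n m)⁻¹) ∧
  ∀ n ∈ N, ∀ m ∈ N, κ (n * m * n⁻¹) n = ε n m * κ n m

end ClassData

section BStruct

variable {k : Type*} [Field k] {H : Type*} [Group H] [DecidableEq H]

/-- The twisted Yetter–Drinfeld structure of `B(N,κ,ε)`:
`e_n` has degree `n` and `h·e_n = ε_h(n) e_{hnh⁻¹}`. -/
def IsBStruct (ω : H → H → H → kˣ) (N : Subgroup H) (hN : N.Normal) (ε : H → H → kˣ)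
    (S : YDOn k ω (↥N →₀ k)) : Prop :=
  (∀ d : H, S.grading d = Submodule.span k {x | ∃ n : ↥N, ↑n = d ∧ x = bGen k N n}) ∧
  ∀ (h : H) (n : ↥N), S.act h (bGen k N n) =
    ((ε h ↑n : kˣ) : k) • bGen k N ⟨h * ↑n * h⁻¹, hN.conj_mem ↑n n.2 h⟩

/-- The multiplication of `B(N,κ,ε)`: `e_n e_m = κ(n,m)⁻¹ e_{nm}`. -/
def IsBMul (N : Subgroup H) (κ : H → H → kˣ)
    (mulB : (↥N →₀ k) ⊗[k] (↥N →₀ k) →ₗ[k] (↥N →₀ k)) : Prop :=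
  ∀ n m : ↥N, mulB (bGen k N n ⊗ₜ[k] bGen k N m) =
    (((κ ↑n ↑m)⁻¹ : kˣ) : k) • bGen k N (n * m)

end BStruct

/-! ### Algebras, étale algebras and Frobenius algebras in the category -/

section Algebras

variable {k : Type*} [Field k] {G : Type*} [Group G] [DecidableEq G] {ω : G → G → G → kˣ}
variable {M : Type*} [AddCommGroup M] [Module k M]

/-- `(M, mulM, uM)` is a connected étale (= connected commutative separable) algebra in
`Z(Vect_G^ω)`. -/
def IsConnectedEtale (T : YDOn k ω M) (mulM : M ⊗[k] M →ₗ[k] M) (uM : k →ₗ[k] M) : Prop :=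
  -- the multiplication is a morphism in the category
  (∃ Tt : YDOn k ω (M ⊗[k] M), IsTensorStruct T T Tt ∧ IsYDHom Tt T mulM) ∧
  -- the unit is a morphism in the category
  (uM 1 ∈ T.grading 1) ∧ (∀ g : G, T.act g (uM 1) = uM 1) ∧
  -- unitality
  (∀ x : M, mulM (uM 1 ⊗ₜ[k] x) = x ∧ mulM (x ⊗ₜ[k] uM 1) = x) ∧
  -- associativity (with respect to the associator of the category)
  (∃ a, IsAssocMap T T T a ∧
      mulM ∘ₗ TensorProduct.map mulM LinearMap.id
        = mulM ∘ₗ TensorProduct.map LinearMap.id mulM ∘ₗ a) ∧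
  -- commutativity
  (∃ c, IsBraidingMap T T c ∧ mulM ∘ₗ c = mulM) ∧
  -- separability
  (∃ (Δ' : M →ₗ[k] M ⊗[k] M) (Tt : YDOn k ω (M ⊗[k] M))
      (a : (M ⊗[k] M) ⊗[k] M →ₗ[k] M ⊗[k] (M ⊗[k] M))
      (a' : M ⊗[k] (M ⊗[k] M) →ₗ[k] (M ⊗[k] M) ⊗[k] M),
      IsTensorStruct T T Tt ∧ IsAssocMap T T T a ∧ IsAssocInvMap T T T a' ∧
      IsYDHom T Tt Δ' ∧ mulM ∘ₗ Δ' = LinearMap.id ∧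
      TensorProduct.map LinearMap.id mulM ∘ₗ a ∘ₗ TensorProduct.map Δ' LinearMap.id
        = Δ' ∘ₗ mulM ∧
      Δ' ∘ₗ mulM
        = TensorProduct.map mulM LinearMap.id ∘ₗ a' ∘ₗ TensorProduct.map LinearMap.id Δ') ∧
  -- connectedness : Hom(1, M) is one-dimensional
  Module.finrank k
    ↥(T.grading 1 ⊓ ⨅ g : G, LinearMap.eqLocus (T.act g) (LinearMap.id : M →ₗ[k] M)) = 1

/-- `(M, mulM, uM)` is a rigid Frobenius (= connected commutative special Frobenius)
algebra in `Z(Vect_G^ω)`. -/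
def IsRigidFrobenius (T : YDOn k ω M) (mulM : M ⊗[k] M →ₗ[k] M) (uM : k →ₗ[k] M) : Prop :=
  IsConnectedEtale T mulM uM ∧
  ∃ (Δ : M →ₗ[k] M ⊗[k] M) (εM : M →ₗ[k] k),
    -- Δ and ε are morphisms in the category
    (∃ Tt : YDOn k ω (M ⊗[k] M), IsTensorStruct T T Tt ∧ IsYDHom T Tt Δ) ∧
    (∀ g : G, εM ∘ₗ T.act g = εM) ∧ (∀ d : G, d ≠ 1 → ∀ v ∈ T.grading d, εM v = 0) ∧
    -- coassociativity and counitality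
    (∀ a, IsAssocMap T T T a →
        a ∘ₗ TensorProduct.map Δ LinearMap.id ∘ₗ Δ = TensorProduct.map LinearMap.id Δ ∘ₗ Δ) ∧
    (TensorProduct.lid k M).toLinearMap ∘ₗ TensorProduct.map εM LinearMap.id ∘ₗ Δ
      = LinearMap.id ∧
    (TensorProduct.rid k M).toLinearMap ∘ₗ TensorProduct.map LinearMap.id εM ∘ₗ Δ
      = LinearMap.id ∧
    -- the Frobenius compatibility
    (∀ a a', IsAssocMap T T T a → IsAssocInvMap T T T a' →
        TensorProduct.map mulM LinearMap.id ∘ₗ a' ∘ₗ TensorProduct.map LinearMap.id Δ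
          = Δ ∘ₗ mulM ∧
        Δ ∘ₗ mulM = TensorProduct.map LinearMap.id mulM ∘ₗ a ∘ₗ TensorProduct.map Δ LinearMap.id) ∧
    -- specialness
    (∃ β : k, β ≠ 0 ∧ mulM ∘ₗ Δ = β • LinearMap.id) ∧
    ∃ β1 : k, β1 ≠ 0 ∧ εM (uM 1) = β1

/-- `(V, ρ)` is a local right module over the commutative algebra `(A, mulA, u)`. -/
def IsLocModule {A V : Type*} [AddCommGroup A] [Module k A] [AddCommGroup V] [Module k V]
    (SA : YDOn k ω A) (mulA : A ⊗[k] A →ₗ[k] A) (u : A)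
    (SV : YDOn k ω V) (ρ : V →ₗ[k] A →ₗ[k] V) : Prop :=
  (∀ d e : G, ∀ v ∈ SV.grading d, ∀ a ∈ SA.grading e, ρ v a ∈ SV.grading (d * e)) ∧
  (∀ v : V, ρ v u = v) ∧
  (∀ (d e f : G) (v : V) (a b : A), v ∈ SV.grading d → a ∈ SA.grading e → b ∈ SA.grading f →
      ρ (ρ v a) b = (((ω d e f)⁻¹ : kˣ) : k) • ρ v (mulA (a ⊗ₜ[k] b))) ∧
  (∀ (h d e : G) (v : V) (a : A), v ∈ SV.grading d → a ∈ SA.grading e →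
      SV.act h (ρ v a) = ((gamc ω h d e : kˣ) : k) • ρ (SV.act h v) (SA.act h a)) ∧
  ∀ (d e : G) (v : V) (a : A), v ∈ SV.grading d → a ∈ SA.grading e →
    ρ v a = ρ (SV.act (d * e * d⁻¹) v) (SA.act d a)

/-- The submodule of `X ⊗ Y` which is divided out to form the relative tensor product
`X ⊗_A Y` over a commutative algebra `A` (the left action on `Y` is obtained from the
right action through the braiding). -/
def relLoc {A X Y : Type*} [AddCommGroup A] [Module k A] [AddCommGroup X] [Module k X]
    [AddCommGroup Y] [Module k Y]
    (SA : YDOn k ω A) (SY : YDOn k ω Y)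
    (ρX : X →ₗ[k] A →ₗ[k] X) (ρY : Y →ₗ[k] A →ₗ[k] Y) : Submodule k (X ⊗[k] Y) :=
  Submodule.span k
    {t | ∃ (e : G) (a : A) (x : X) (y : Y), a ∈ SA.grading e ∧
      t = ρX x a ⊗ₜ[k] y - x ⊗ₜ[k] ρY (SY.act e y) a}

end Algebras

end DW

open DW

namespace DW

section Cocycle
variable {G : Type*} [Group G] {M : Type*} [CommGroup M] {ω : G → G → G → M}

lemma tauc_cancel (ω : G → G → G → M) (h kk d : G)
    (h1 : h * kk * d * (h * kk)⁻¹ = h) (h2 : kk * d * kk⁻¹ = h) :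
    tauc ω h kk d = ω h kk d := by
  unfold tauc; rw [h1, h2, mul_inv_cancel_right]

lemma omega_inv1 (hω : IsCocycle ω) (hnorm : IsNormalized ω) (d : G) :
    ω d d⁻¹ d * ω d⁻¹ d d⁻¹ = 1 := by
  have h := hω d d⁻¹ d d⁻¹
  rw [mul_inv_cancel, inv_mul_cancel, hnorm 1 d d⁻¹ (by tauto), hnorm d d⁻¹ 1 (by tauto),
    hnorm d 1 d⁻¹ (by tauto), mul_one, mul_one] at h
  exact h.symm

lemma key_id (hω : IsCocycle ω) (hnorm : IsNormalized ω) (d : G) :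
    ω d (d⁻¹ * d⁻¹ * d) d⁻¹ = ω d d⁻¹ d⁻¹ := by
  have h1 := hω d⁻¹ d⁻¹ d d⁻¹
  rw [mul_inv_cancel, inv_mul_cancel, hnorm d⁻¹ d⁻¹ 1 (by tauto), hnorm d⁻¹ 1 d⁻¹ (by tauto),
    mul_one, mul_one] at h1
  -- h1 : ω (d⁻¹*d⁻¹) d d⁻¹ = ω d⁻¹ d⁻¹ d * ω d⁻¹ d d⁻¹
  have h2 := hω d d⁻¹ d⁻¹ d
  rw [mul_inv_cancel, inv_mul_cancel, hnorm 1 d⁻¹ d (by tauto), hnorm d d⁻¹ 1 (by tauto),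
    one_mul] at h2
  -- h2 : 1 = ω d d⁻¹ d⁻¹ * ω d (d⁻¹ * d⁻¹) d * ω d⁻¹ d⁻¹ d
  have h3 := hω d (d⁻¹ * d⁻¹) d d⁻¹
  rw [show d * (d⁻¹ * d⁻¹) = d⁻¹ by group, mul_inv_cancel,
    hnorm d (d⁻¹ * d⁻¹) 1 (by tauto), mul_one] at h3
  -- h3 : ω d⁻¹ d d⁻¹ = ω d (d⁻¹*d⁻¹) d * ω d (d⁻¹*d⁻¹*d) d⁻¹ * ω (d⁻¹*d⁻¹) d d⁻¹
  set A := ω d⁻¹ d⁻¹ d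
  set B := ω d⁻¹ d d⁻¹
  set C := ω d d⁻¹ d⁻¹
  set Y := ω d (d⁻¹ * d⁻¹) d
  set Z := ω d (d⁻¹ * d⁻¹ * d) d⁻¹
  set X1 := ω (d⁻¹ * d⁻¹) d d⁻¹
  -- h1 : X1 = A * B ; h2 : 1 = C * Y * A ; h3 : B = Y * Z * X1 ; goal : Z = C
  have hz : Y * Z * A = 1 := by
    have : B = Y * Z * A * B := by conv_lhs => rw [h3, h1, ← mul_assoc]
    exact (right_eq_mul.mp this)
  have hZ : Z = (Y * A)⁻¹ := by
    rw [mul_right_comm] at hz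
    exact eq_inv_of_mul_eq_one_right hz
  have hC : C = (Y * A)⁻¹ := by
    rw [mul_assoc] at h2
    exact eq_inv_of_mul_eq_one_left h2.symm
  rw [hZ, hC]


lemma tauc_conj (ω : G → G → G → M) (g d : G) :
    tauc ω (g * d * g⁻¹) g d = tauc ω g d d := by
  rw [tauc_cancel ω (g * d * g⁻¹) g d (by group) rfl]
  unfold tauc
  rw [show g * d * d * (g * d)⁻¹ = g * d * g⁻¹ by group, show d * d * d⁻¹ = d by group,
    mul_right_comm, mul_inv_cancel, one_mul]

lemma tauc_inv_self (hω : IsCocycle ω) (hnorm : IsNormalized ω) (d : G) :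
    tauc ω d⁻¹ d d = ω d d⁻¹ d := by
  have hk := key_id hω hnorm d⁻¹
  rw [inv_inv] at hk
  unfold tauc
  rw [show d⁻¹ * d * d * (d⁻¹ * d)⁻¹ = d by group, show d * d * d⁻¹ = d * d * d⁻¹ from rfl, hk,
    mul_right_comm, mul_inv_cancel, one_mul]

lemma gamc_inv_self (hω : IsCocycle ω) (hnorm : IsNormalized ω) (d : G) :
    gamc ω d⁻¹ d d⁻¹ = ω d⁻¹ d d⁻¹ := by
  unfold gamc
  rw [show d⁻¹ * d * d⁻¹⁻¹ = d by group, show d⁻¹ * d⁻¹ * d⁻¹⁻¹ = d⁻¹ * d⁻¹ * d by rw [inv_inv],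
    key_id hω hnorm d, mul_inv_cancel_right]

lemma twist_pair (hω : IsCocycle ω) (hnorm : IsNormalized ω) (d : G) :
    tauc ω d⁻¹ d d * gamc ω d⁻¹ d d⁻¹ = 1 := by
  rw [tauc_inv_self hω hnorm d, gamc_inv_self hω hnorm d, omega_inv1 hω hnorm d]

lemma ribbon_scalar (hω : IsCocycle ω) (a b : G) :
    gamc ω (a * b) a b
      = tauc ω (a * b * a⁻¹ * a * (a * b * a⁻¹)⁻¹) (a * b * a⁻¹) a * tauc ω (a * b * a⁻¹) a b := by
  rw [tauc_cancel ω (a * b * a⁻¹ * a * (a * b * a⁻¹)⁻¹) (a * b * a⁻¹) a (by group) rfl,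
    tauc_cancel ω (a * b * a⁻¹) a b (by group) rfl]
  unfold gamc
  rw [show a * b * a * (a * b)⁻¹ = a * b * a⁻¹ * a * (a * b * a⁻¹)⁻¹ by group,
    show a * b * b * (a * b)⁻¹ = a * b * a⁻¹ by group]
  generalize hP : a * b * a⁻¹ * a * (a * b * a⁻¹)⁻¹ = P
  have h := hω P (a * b * a⁻¹) a b
  rw [show P * (a * b * a⁻¹) = a * b by rw [← hP]; group,
    show a * b * a⁻¹ * a = a * b by group] at h
  rw [h, mul_right_comm (ω P (a * b * a⁻¹) a), mul_inv_cancel_right]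

end Cocycle

section YDHelpers

variable {k : Type*} [Field k] {G : Type*} [Group G] [DecidableEq G] {ω : G → G → G → kˣ}
variable {M : Type*} [AddCommGroup M] [Module k M]

lemma YD_ext {N : Type*} [AddCommGroup N] [Module k N] (S : YDOn k ω M)
    {f g : M →ₗ[k] N} (h : ∀ d : G, ∀ v ∈ S.grading d, f v = g v) : f = g := by
  ext v
  have hv : v ∈ ⨆ d, S.grading d := by
    rw [S.internal.submodule_iSup_eq_top]; trivial
  refine Submodule.iSup_induction (motive := fun v => f v = g v) S.grading hv h (by simp) ?_
  intro x y hx hy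
  simp [map_add, hx, hy]

lemma act_mem' (S : YDOn k ω M) {g d e : G} {v : M} (hv : v ∈ S.grading d)
    (he : g * d * g⁻¹ = e) : S.act g v ∈ S.grading e := he ▸ S.act_mem g d v hv

/-- An auxiliary "inverse-twist-like" map `v_d ↦ c d • d⁻¹ · v_d`. -/
noncomputable def psiMap (S : YDOn k ω M) (c : G → k) : M →ₗ[k] M :=
  (LinearEquiv.ofBijective (DirectSum.coeLinearMap S.grading) S.internal).toLinearMap ∘ₗ
    DirectSum.toModule k G (DirectSum G (fun d => ↥(S.grading d))) (fun d =>
      DirectSum.lof k G (fun i => S.grading i) d ∘ₗ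
        LinearMap.restrict (c d • S.act d⁻¹) (p := S.grading d) (q := S.grading d)
          (fun x hx => Submodule.smul_mem _ _ (act_mem' S hx (by group : d⁻¹ * d * d⁻¹⁻¹ = d)))) ∘ₗ
    (LinearEquiv.ofBijective (DirectSum.coeLinearMap S.grading) S.internal).symm.toLinearMap

lemma psiMap_apply (S : YDOn k ω M) (c : G → k) {d : G} {v : M} (hv : v ∈ S.grading d) :
    psiMap S c v = c d • S.act d⁻¹ v := by
  set E := LinearEquiv.ofBijective (DirectSum.coeLinearMap S.grading) S.internal with hE
  have h0 : ∀ (e : G) (x : S.grading e), E (DirectSum.lof k G (fun i => S.grading i) e x) = x := by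
    intro e x
    show DirectSum.coeLinearMap S.grading (DirectSum.lof k G (fun i => S.grading i) e x) = x
    rw [DirectSum.lof_eq_of, DirectSum.coeLinearMap_of]
  have h1 : E.symm v = DirectSum.lof k G (fun i => S.grading i) d ⟨v, hv⟩ :=
    E.symm_apply_eq.mpr (h0 d ⟨v, hv⟩).symm
  simp only [psiMap, LinearMap.comp_apply, LinearEquiv.coe_coe, ← hE, h1,
    DirectSum.toModule_lof]
  rw [h0]
  simp [LinearMap.restrict_apply]

lemma twist_bijective (hω : IsCocycle ω) (S : YDOn k ω M) (θ : M →ₗ[k] M)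
    (hθ : IsTwistMap S θ) : Function.Bijective θ := by
  constructor
  · have hl : (psiMap S (fun d => ((tauc ω d⁻¹ d d)⁻¹ : kˣ))) ∘ₗ θ = LinearMap.id := by
      refine YD_ext S ?_
      intro d v hv
      simp only [LinearMap.comp_apply, LinearMap.id_apply]
      rw [hθ d v hv, psiMap_apply S _ (show S.act d v ∈ S.grading d from act_mem' S hv (by group)),
        S.act_act d⁻¹ d d v hv, inv_mul_cancel, S.act_one, LinearMap.id_apply,
        smul_smul, ← Units.val_mul, inv_mul_cancel, Units.val_one, one_smul]
    intro x y hxy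
    have hx := LinearMap.congr_fun hl x
    have hy := LinearMap.congr_fun hl y
    simp only [LinearMap.comp_apply, LinearMap.id_apply] at hx hy
    rw [← hx, ← hy, hxy]
  · have hr : θ ∘ₗ (psiMap S (fun d => ((tauc ω d d⁻¹ d)⁻¹ : kˣ))) = LinearMap.id := by
      refine YD_ext S ?_
      intro d v hv
      simp only [LinearMap.comp_apply, LinearMap.id_apply]
      rw [psiMap_apply S _ hv, map_smul,
        hθ d (S.act d⁻¹ v) (show S.act d⁻¹ v ∈ S.grading d from act_mem' S hv (by group)),
        S.act_act d d⁻¹ d v hv, mul_inv_cancel, S.act_one, LinearMap.id_apply,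
        smul_smul, ← Units.val_mul, inv_mul_cancel, Units.val_one, one_smul]
    intro y
    refine ⟨psiMap S (fun d => ((tauc ω d d⁻¹ d)⁻¹ : kˣ)) y, ?_⟩
    have := LinearMap.congr_fun hr y
    simpa using this

end YDHelpers

end DW

/-- Proposition 2.12: the maps `θ_V(v_d) = d·v_d` form a ribbon twist on
the braided monoidal category `Z(Vect_G^ω)` of twisted Yetter–Drinfeld modules:
each `θ_V` is a natural isomorphism of twisted Yetter–Drinfeld modules,
`θ_{V⊗W} = (θ_V ⊗ θ_W) ∘ c_{W,V} ∘ c_{V,W}`, `θ` is the identity on the unit object,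
and `(θ_V)^* = θ_{V^*}`. -/
theorem ribbon_twist {k : Type*} [Field k] [IsAlgClosed k] {G : Type*} [Group G] [Finite G]
    [DecidableEq G] (ω : G → G → G → kˣ) (hω : IsCocycle ω) (hnorm : IsNormalized ω) :
    -- each θ_V is an isomorphism of twisted Yetter–Drinfeld modules
    (∀ (V : Type) [AddCommGroup V] [Module k V] (S : YDOn k ω V) (θ : V →ₗ[k] V),
        IsTwistMap S θ → IsYDHom S S θ ∧ Function.Bijective θ) ∧
    -- naturality of θ
    (∀ (V W : Type) [AddCommGroup V] [Module k V] [AddCommGroup W] [Module k W]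
        (SV : YDOn k ω V) (SW : YDOn k ω W) (f : V →ₗ[k] W)
        (θV : V →ₗ[k] V) (θW : W →ₗ[k] W),
        IsYDHom SV SW f → IsTwistMap SV θV → IsTwistMap SW θW → f ∘ₗ θV = θW ∘ₗ f) ∧
    -- θ_{V⊗W} = (θ_V ⊗ θ_W) ∘ c_{W,V} ∘ c_{V,W}
    (∀ (V W : Type) [AddCommGroup V] [Module k V] [AddCommGroup W] [Module k W]
        (SV : YDOn k ω V) (SW : YDOn k ω W) (T : YDOn k ω (V ⊗[k] W)),
        IsTensorStruct SV SW T →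
        ∀ (cVW : V ⊗[k] W →ₗ[k] W ⊗[k] V) (cWV : W ⊗[k] V →ₗ[k] V ⊗[k] W),
          IsBraidingMap SV SW cVW → IsBraidingMap SW SV cWV →
          ∀ (θV : V →ₗ[k] V) (θW : W →ₗ[k] W) (θT : V ⊗[k] W →ₗ[k] V ⊗[k] W),
            IsTwistMap SV θV → IsTwistMap SW θW → IsTwistMap T θT →
            θT = TensorProduct.map θV θW ∘ₗ cWV ∘ₗ cVW) ∧
    -- θ is the identity on the unit object
    (∀ (U : Type) [AddCommGroup U] [Module k U] (SU : YDOn k ω U) (θU : U →ₗ[k] U),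
        (∀ d : G, d ≠ 1 → SU.grading d = ⊥) → IsTwistMap SU θU → θU = LinearMap.id) ∧
    -- compatibility with duals : (θ_V)^* = θ_{V^*}
    (∀ (V : Type) [AddCommGroup V] [Module k V] [Module.Finite k V]
        (SV : YDOn k ω V) (D : YDOn k ω (Module.Dual k V)),
        (∀ d : G, D.grading d = ⨅ (e : G) (_ : e ≠ d⁻¹), (SV.grading e).dualAnnihilator) →
        (∀ (g d e : G) (f : Module.Dual k V) (v : V), f ∈ D.grading d → v ∈ SV.grading e →
            D.act g f (SV.act g v) = (((gamc ω g d e)⁻¹ : kˣ) : k) * f v) →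
        ∀ (θV : V →ₗ[k] V) (θD : Module.Dual k V →ₗ[k] Module.Dual k V),
          IsTwistMap SV θV → IsTwistMap D θD → θD = LinearMap.dualMap θV) := by
  refine ⟨?_, ?_, ?_, ?_, ?_⟩
  · -- θ_V is an isomorphism of YD modules
    intro V _ _ S θ hθ
    refine ⟨⟨?_, ?_⟩, twist_bijective hω S θ hθ⟩
    · intro d v hv
      rw [hθ d v hv]
      exact act_mem' S hv (by group)
    · intro g
      refine YD_ext S ?_
      intro d v hv
      simp only [LinearMap.comp_apply]
      rw [hθ (g * d * g⁻¹) (S.act g v) (S.act_mem g d v hv),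
        S.act_act (g * d * g⁻¹) g d v hv, hθ d v hv, S.act_act g d d v hv,
        tauc_conj ω g d, show g * d * g⁻¹ * g = g * d by group]
  · -- naturality
    intro V W _ _ _ _ SV SW f θV θW hf hθV hθW
    refine YD_ext SV ?_
    intro d v hv
    simp only [LinearMap.comp_apply]
    rw [hθV d v hv, hθW d (f v) (hf.1 d v hv)]
    have := LinearMap.congr_fun (hf.2 d) v
    simpa using this
  · -- θ on tensor products
    intro V W _ _ _ _ SV SW T hT cVW cWV hcVW hcWV θV θW θT hθV hθW hθT
    symm
    refine TensorProduct.ext' ?_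
    intro v w
    have hv : v ∈ ⨆ a, SV.grading a := by rw [SV.internal.submodule_iSup_eq_top]; trivial
    refine Submodule.iSup_induction
      (motive := fun v => (TensorProduct.map θV θW ∘ₗ cWV ∘ₗ cVW) (v ⊗ₜ[k] w) = θT (v ⊗ₜ[k] w))
      SV.grading hv ?_ (by simp) ?_
    · intro a v hva
      have hw : w ∈ ⨆ b, SW.grading b := by rw [SW.internal.submodule_iSup_eq_top]; trivial
      refine Submodule.iSup_induction
        (motive := fun w => (TensorProduct.map θV θW ∘ₗ cWV ∘ₗ cVW) (v ⊗ₜ[k] w) = θT (v ⊗ₜ[k] w))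
        SW.grading hw ?_ (by simp) ?_
      · intro b w hwb
        have hvw : v ⊗ₜ[k] w ∈ T.grading (a * b) := by
          rw [hT.1]
          refine Submodule.mem_iSup_of_mem a ?_
          have hw' : w ∈ SW.grading (a⁻¹ * (a * b)) := by rw [inv_mul_cancel_left]; exact hwb
          exact Submodule.apply_mem_map₂ (TensorProduct.mk k V W) hva hw'
        rw [hθT (a * b) (v ⊗ₜ[k] w) hvw, hT.2 (a * b) a b v w hva hwb]
        simp only [LinearMap.comp_apply]
        rw [hcVW a v w hva]
        have h1 : SW.act a w ∈ SW.grading (a * b * a⁻¹) := SW.act_mem a b w hwb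
        rw [hcWV (a * b * a⁻¹) (SW.act a w) v h1, TensorProduct.map_tmul,
          hθV (a * b * a⁻¹ * a * (a * b * a⁻¹)⁻¹) (SV.act (a * b * a⁻¹) v)
            (SV.act_mem (a * b * a⁻¹) a v hva),
          SV.act_act (a * b * a⁻¹ * a * (a * b * a⁻¹)⁻¹) (a * b * a⁻¹) a v hva,
          hθW (a * b * a⁻¹) (SW.act a w) h1,
          SW.act_act (a * b * a⁻¹) a b w hwb,
          ← TensorProduct.smul_tmul', TensorProduct.tmul_smul, smul_smul, ← Units.val_mul,
          ← ribbon_scalar hω a b,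
          show a * b * a⁻¹ * a * (a * b * a⁻¹)⁻¹ * (a * b * a⁻¹) = a * b by group,
          show a * b * a⁻¹ * a = a * b by group]
      · intro x y hx hy
        simp only [TensorProduct.tmul_add, map_add, hx, hy]
    · intro x y hx hy
      simp only [TensorProduct.add_tmul, map_add, hx, hy]
  · -- θ on the unit object
    intro U _ _ SU θU hgr hθ
    refine YD_ext SU ?_
    intro d v hv
    by_cases hd : d = 1
    · subst hd
      rw [hθ 1 v hv, SU.act_one]
    · have hz : v = 0 := by rw [hgr d hd] at hv; simpa using hv
      simp [hz]
  · -- θ on duals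
    intro V _ _ _ SV D hDgr hpair θV θD hθV hθD
    refine YD_ext D ?_
    intro d f hf
    refine YD_ext SV ?_
    intro e v hv
    rw [hθD d f hf, LinearMap.dualMap_apply, hθV e v hv]
    have hfd : D.act d f ∈ D.grading d := act_mem' D hf (by group)
    by_cases he : e = d⁻¹
    · subst he
      have h := hpair d⁻¹ d d⁻¹ (D.act d f) v hfd hv
      rw [D.act_act d⁻¹ d d f hf, inv_mul_cancel, D.act_one, LinearMap.id_apply] at h
      simp only [LinearMap.smul_apply, smul_eq_mul] at h
      have hsc : (gamc ω d⁻¹ d d⁻¹)⁻¹ = tauc ω d⁻¹ d d :=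
        (eq_inv_of_mul_eq_one_left (twist_pair hω hnorm d)).symm
      rw [hsc] at h
      exact (mul_left_cancel₀ (Units.ne_zero (tauc ω d⁻¹ d d)) h).symm
    · have hav : SV.act e v ∈ SV.grading e := act_mem' SV hv (by group)
      have z1 : (D.act d f) v = 0 := by
        rw [hDgr d] at hfd
        simp only [Submodule.mem_iInf] at hfd
        exact (Submodule.mem_dualAnnihilator _).mp (hfd e he) v hv
      have z2 : f (SV.act e v) = 0 := by
        rw [hDgr d] at hf
        simp only [Submodule.mem_iInf] at hf
        exact (Submodule.mem_dualAnnihilator _).mp (hf e he) _ hav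
      rw [z1, z2]
end

section
/- Let H be a subgroup of G and V a twisted Yetter–Drinfeld module over (H,ω|_H). Then I(V) = kG⊗V modulo the relations gh⊗v_d = τ(g,h)(d)⁻¹ g⊗(h·v_d) (for g ∈ G, h,d ∈ H), with G-grading deg(g⊗v_d) = gdg⁻¹ and action k·(g⊗v_d) = τ(k,g)(d)·(kg⊗v_d) for k ∈ G, is a well-defined twisted Yetter–Drinfeld module over (G,ω): the grading squares with the coaction, the action respects the relations, g·(I(V))_d ⊆ (I(V))_{gdg⁻¹}, and h·(k·x) = τ(h,k)(d)·(hk·x) for x ∈ (I(V))_d. -/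
open scoped TensorProduct

open DW
namespace DWAux

open DW

section KeyComm

lemma key_comm {M : Type*} [CommGroup M]
    {K Z N P W J Sv Y Mm U F L R Q O X : M}
    (E1 : P * Q = R * Sv * U)
    (E2 : X * Y = Z * W * R)
    (E3 : X * Mm = N * O * F)
    (E4 : J * Q = K * O * L) :
    K * Z * N⁻¹ * (P * W * J⁻¹) = Sv * Y * Mm⁻¹ * (U * F * L⁻¹) := by
  have key : (K*Z*(P*(W*(Mm*L))))*(O*(Q*X)) = (Sv*Y*(U*(F*(N*J))))*(O*(Q*X)) := by
    calc (K*Z*(P*(W*(Mm*L))))*(O*(Q*X))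
        = (K*O*L)*((P*Q)*(Z*(W*(Mm*X)))) := by ac_rfl
      _ = (J*Q)*((R*Sv*U)*(Z*(W*(Mm*X)))) := by rw [E4, E1]
      _ = (Z*W*R)*((X*Mm)*(J*(Q*(Sv*U)))) := by ac_rfl
      _ = (X*Y)*((N*O*F)*(J*(Q*(Sv*U)))) := by rw [← E2, E3]
      _ = (Sv*Y*(U*(F*(N*J))))*(O*(Q*X)) := by ac_rfl
  have h := mul_right_cancel key
  have h2 : (K * Z * N⁻¹ * (P * W * J⁻¹)) * (N*(J*(Mm*L)))
      = (Sv * Y * Mm⁻¹ * (U * F * L⁻¹)) * (N*(J*(Mm*L))) := by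
    calc (K * Z * N⁻¹ * (P * W * J⁻¹)) * (N*(J*(Mm*L)))
        = (N⁻¹*N)*((J⁻¹*J)*(K*Z*(P*(W*(Mm*L))))) := by ac_rfl
      _ = K*Z*(P*(W*(Mm*L))) := by rw [inv_mul_cancel, inv_mul_cancel, one_mul, one_mul]
      _ = Sv*Y*(U*(F*(N*J))) := h
      _ = (Mm⁻¹*Mm)*((L⁻¹*L)*(Sv*Y*(U*(F*(N*J))))) := by
          rw [inv_mul_cancel, inv_mul_cancel, one_mul, one_mul]
      _ = (Sv * Y * Mm⁻¹ * (U * F * L⁻¹)) * (N*(J*(Mm*L))) := by ac_rfl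
  exact mul_right_cancel h2

variable {G : Type*} [Group G] {M : Type*} [CommGroup M]

lemma tau_star {ω : G → G → G → M} (hω : IsCocycle ω) (a b c d : G) :
    tauc ω a b (c*d*c⁻¹) * tauc ω (a*b) c d = tauc ω a (b*c) d * tauc ω b c d := by
  have E1 := hω a b c d
  have E2 := hω (a*(b*(c*d*c⁻¹)*b⁻¹)*a⁻¹) a b c
  have E3 := hω a (b*(c*d*c⁻¹)*b⁻¹) b c
  have E4 := hω a b (c*d*c⁻¹) c
  have r1 : a*b*(c*d*c⁻¹)*(a*b)⁻¹ = a*(b*(c*d*c⁻¹)*b⁻¹)*a⁻¹ := by group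
  have r2 : a*b*c*d*(a*b*c)⁻¹ = a*(b*(c*d*c⁻¹)*b⁻¹)*a⁻¹ := by group
  have r3 : a*(b*c)*d*(a*(b*c))⁻¹ = a*(b*(c*d*c⁻¹)*b⁻¹)*a⁻¹ := by group
  have r4 : b*c*d*(b*c)⁻¹ = b*(c*d*c⁻¹)*b⁻¹ := by group
  have r6 : a*(b*(c*d*c⁻¹)*b⁻¹)*a⁻¹*a = a*(b*(c*d*c⁻¹)*b⁻¹) := by group
  have r7 : b*(c*d*c⁻¹)*b⁻¹*b = b*(c*d*c⁻¹) := by group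
  have r8 : c*d*c⁻¹*c = c*d := by group
  rw [r6] at E2
  rw [r7] at E3
  rw [r8] at E4
  unfold tauc
  rw [r1, r2, r3, r4]
  exact key_comm E1 E2 E3 E4

lemma tauc_one_left {ω : G → G → G → M} (hnorm : IsNormalized ω) (g d : G) :
    tauc ω 1 g d = 1 := by
  unfold tauc
  rw [hnorm 1 g d (Or.inl rfl), hnorm _ 1 g (Or.inr (Or.inl rfl)),
    hnorm 1 _ g (Or.inl rfl)]
  simp

end KeyComm

section Proj

variable {k : Type*} [Field k] {Γ : Type*} [Group Γ] [DecidableEq Γ] {ωΓ : Γ → Γ → Γ → kˣ}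
  {V : Type*} [AddCommGroup V] [Module k V] (S : YDOn k ωΓ V)

/-- The projection onto the degree-`e` component. -/
noncomputable def pr (e : Γ) : V →ₗ[k] V :=
  (S.grading e).subtype
    ∘ₗ (DirectSum.component k Γ (fun i => ↥(S.grading i)) e)
    ∘ₗ (LinearEquiv.ofBijective (DirectSum.coeLinearMap S.grading)
        S.internal).symm.toLinearMap

lemma pr_mem (e : Γ) (v : V) : pr S e v ∈ S.grading e := by
  simp only [pr, LinearMap.comp_apply]
  exact SetLike.coe_mem _

lemma pr_apply_of_mem {e e' : Γ} {v : V} (hv : v ∈ S.grading e) :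
    pr S e' v = if e' = e then v else 0 := by
  simp only [pr, LinearMap.comp_apply, LinearEquiv.coe_toLinearMap]
  split_ifs with h
  · subst h
    rw [show (DirectSum.component k Γ (fun i => ↥(S.grading i)) e')
        ((LinearEquiv.ofBijective (DirectSum.coeLinearMap S.grading) S.internal).symm v)
      = ⟨v, hv⟩ from S.internal.ofBijective_coeLinearMap_of_mem hv]
    rfl
  · rw [show (DirectSum.component k Γ (fun i => ↥(S.grading i)) e')
        ((LinearEquiv.ofBijective (DirectSum.coeLinearMap S.grading) S.internal).symm v)
      = 0 from S.internal.ofBijective_coeLinearMap_of_mem_ne (Ne.symm h) hv]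
    rfl

lemma pr_eq_of_mem {e : Γ} {v : V} (hv : v ∈ S.grading e) : pr S e v = v := by
  rw [pr_apply_of_mem S hv, if_pos rfl]

lemma pr_eq_zero_of_mem {e e' : Γ} (h : e' ≠ e) {v : V} (hv : v ∈ S.grading e) :
    pr S e' v = 0 := by
  rw [pr_apply_of_mem S hv, if_neg h]

lemma sum_pr [Fintype Γ] (v : V) : ∑ e : Γ, pr S e v = v := by
  classical
  set D := LinearEquiv.ofBijective (DirectSum.coeLinearMap S.grading) S.internal with hD
  have h1 : ∀ e : Γ, pr S e v = DirectSum.coeLinearMap S.grading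
      (DirectSum.of (fun i => ↥(S.grading i)) e ((D.symm v) e)) := by
    intro e
    rw [DirectSum.coeLinearMap_of]
    rfl
  calc ∑ e : Γ, pr S e v
      = DirectSum.coeLinearMap S.grading
        (∑ e : Γ, DirectSum.of (fun i => ↥(S.grading i)) e ((D.symm v) e)) := by
        rw [map_sum]; exact Finset.sum_congr rfl fun e _ => h1 e
    _ = DirectSum.coeLinearMap S.grading (D.symm v) := by rw [DirectSum.sum_univ_of]
    _ = v := D.apply_symm_apply v

end Proj

section Induced2

variable {k : Type*} [Field k] {G : Type*} [Group G] [DecidableEq G]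
  (ω : G → G → G → kˣ) (H : Subgroup G)
  {V : Type*} [AddCommGroup V] [Module k V] (S : YDOn k (resCocycle ω H) V)
  [Fintype ↥H]

lemma starK {ω : G → G → G → kˣ} (hω : IsCocycle ω) (a b c d : G) :
    ((tauc ω a b (c*d*c⁻¹) : kˣ) : k) * ((tauc ω (a*b) c d : kˣ) : k)
      = ((tauc ω a (b*c) d : kˣ) : k) * ((tauc ω b c d : kˣ) : k) := by
  exact_mod_cast congrArg Units.val (tau_star hω a b c d)

lemma starKu {ω : G → G → G → kˣ} (hω : IsCocycle ω) (c g h d : G) :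
    (tauc ω g h d)⁻¹ * tauc ω c g (h*d*h⁻¹)
      = tauc ω c (g*h) d * (tauc ω (c*g) h d)⁻¹ := by
  have h0 := tau_star hω c g h d
  refine mul_right_cancel (b := tauc ω g h d * tauc ω (c*g) h d) ?_
  calc (tauc ω g h d)⁻¹ * tauc ω c g (h*d*h⁻¹) * (tauc ω g h d * tauc ω (c*g) h d)
      = ((tauc ω g h d)⁻¹ * tauc ω g h d)
        * (tauc ω c g (h*d*h⁻¹) * tauc ω (c*g) h d) := by ac_rfl
    _ = tauc ω c g (h*d*h⁻¹) * tauc ω (c*g) h d := by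
        rw [inv_mul_cancel, one_mul]
    _ = tauc ω c (g*h) d * tauc ω g h d := h0
    _ = ((tauc ω (c*g) h d)⁻¹ * tauc ω (c*g) h d)
        * (tauc ω c (g*h) d * tauc ω g h d) := by
        rw [inv_mul_cancel, one_mul]
    _ = tauc ω c (g*h) d * (tauc ω (c*g) h d)⁻¹
        * (tauc ω g h d * tauc ω (c*g) h d) := by ac_rfl

lemma starK' {ω : G → G → G → kˣ} (hω : IsCocycle ω) (c g h d : G) :
    (((tauc ω g h d)⁻¹ : kˣ) : k) * ((tauc ω c g (h*d*h⁻¹) : kˣ) : k)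
      = ((tauc ω c (g*h) d : kˣ) : k) * (((tauc ω (c*g) h d)⁻¹ : kˣ) : k) := by
  exact_mod_cast congrArg Units.val (starKu (k := k) hω c g h d)

/-- The raw twisted action of `c : G` on `kG ⊗ V`. -/
noncomputable def rAct (c : G) : (G →₀ V) →ₗ[k] (G →₀ V) :=
  Finsupp.lsum k fun g => (Finsupp.lsingle (c*g)).comp
    (∑ e : ↥H, (((tauc ω c g ↑e : kˣ) : k) • pr S e))

lemma rAct_single (c g : G) (v : V) :
    rAct ω H S c (Finsupp.single g v)
      = Finsupp.single (c*g) (∑ e : ↥H, ((tauc ω c g ↑e : kˣ) : k) • pr S e v) := by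
  rw [rAct, Finsupp.lsum_single, LinearMap.comp_apply]
  congr 1
  rw [LinearMap.sum_apply]
  rfl

lemma rAct_single_hom (c g : G) {e : ↥H} {v : V} (hv : v ∈ S.grading e) :
    rAct ω H S c (Finsupp.single g v)
      = ((tauc ω c g ↑e : kˣ) : k) • Finsupp.single (c * g) v := by
  rw [rAct_single, Finsupp.smul_single]
  congr 1
  rw [Finset.sum_eq_single e]
  · rw [pr_eq_of_mem S hv]
  · intro e' _ hne
    rw [pr_eq_zero_of_mem S hne hv, smul_zero]
  · intro h
    exact absurd (Finset.mem_univ e) h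

/-- The raw projection onto degree `dd` of `kG ⊗ V`. -/
noncomputable def rPr (dd : G) : (G →₀ V) →ₗ[k] (G →₀ V) :=
  Finsupp.lsum k fun g => (Finsupp.lsingle g).comp
    (∑ e : ↥H, if g * ↑e * g⁻¹ = dd then pr S e else 0)

lemma rPr_single_hom (dd g : G) {e : ↥H} {v : V} (hv : v ∈ S.grading e) :
    rPr ω H S dd (Finsupp.single g v)
      = if g * ↑e * g⁻¹ = dd then Finsupp.single g v else 0 := by
  rw [rPr, Finsupp.lsum_single, LinearMap.comp_apply]
  have hinner : (∑ e' : ↥H, if g * ↑e' * g⁻¹ = dd then pr S e' else 0) v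
      = if g * ↑e * g⁻¹ = dd then v else 0 := by
    rw [LinearMap.sum_apply, Finset.sum_eq_single e]
    · split_ifs with h
      · rw [pr_eq_of_mem S hv]
      · rfl
    · intro e' _ hne
      split_ifs with h
      · rw [pr_eq_zero_of_mem S hne hv]
      · rfl
    · intro h
      exact absurd (Finset.mem_univ e) h
  rw [hinner]
  split_ifs with h
  · rfl
  · exact Finsupp.single_zero g

lemma coe_conj (h d : ↥H) : ((h * d * h⁻¹ : ↥H) : G) = (h : G) * (d : G) * (h : G)⁻¹ := by
  push_cast
  rfl

lemma rAct_rel (hω : IsCocycle ω) (c : G) :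
    Submodule.map (rAct ω H S c) (indRel ω H S) ≤ indRel ω H S := by
  rw [indRel, Submodule.map_span, Submodule.span_le]
  rintro x ⟨y, ⟨g, h, d, v, hv, rfl⟩, rfl⟩
  have hmem : S.act h v ∈ S.grading (h * d * h⁻¹) := S.act_mem h d v hv
  rw [map_sub, map_smul, rAct_single_hom ω H S c _ hv, rAct_single_hom ω H S c _ hmem,
    coe_conj]
  have hx : (Finsupp.single (c * g * ↑h) v
      - (((tauc ω (c * g) ↑h ↑d)⁻¹ : kˣ) : k) • Finsupp.single (c * g) (S.act h v))
      ∈ indRel ω H S :=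
    Submodule.subset_span ⟨c * g, h, d, v, hv, rfl⟩
  have heq : ((tauc ω c (g * ↑h) ↑d : kˣ) : k) • Finsupp.single (c * (g * ↑h)) v
      - (((tauc ω g ↑h ↑d)⁻¹ : kˣ) : k) •
        (((tauc ω c g (↑h * ↑d * (↑h)⁻¹) : kˣ) : k) • Finsupp.single (c * g) (S.act h v))
      = ((tauc ω c (g * ↑h) ↑d : kˣ) : k) • (Finsupp.single (c * g * ↑h) v
        - (((tauc ω (c * g) ↑h ↑d)⁻¹ : kˣ) : k) • Finsupp.single (c * g) (S.act h v)) := by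
    rw [smul_sub, smul_smul, smul_smul, ← mul_assoc c g ↑h,
      starK' (k := k) hω c g ↑h ↑d]
  rw [heq]
  exact Submodule.smul_mem _ _ hx

lemma rPr_rel (dd : G) :
    Submodule.map (rPr ω H S dd) (indRel ω H S) ≤ indRel ω H S := by
  rw [indRel, Submodule.map_span, Submodule.span_le]
  rintro x ⟨y, ⟨g, h, d, v, hv, rfl⟩, rfl⟩
  have hmem : S.act h v ∈ S.grading (h * d * h⁻¹) := S.act_mem h d v hv
  rw [map_sub, map_smul, rPr_single_hom ω H S dd _ hv, rPr_single_hom ω H S dd _ hmem,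
    coe_conj]
  have hcond : g * ↑h * ↑d * (g * ↑h)⁻¹ = g * ((h : G) * ↑d * (↑h)⁻¹) * g⁻¹ := by group
  rw [hcond]
  by_cases hc : g * ((h : G) * ↑d * (↑h)⁻¹) * g⁻¹ = dd
  · rw [if_pos hc, if_pos hc]
    exact Submodule.subset_span ⟨g, h, d, v, hv, rfl⟩
  · rw [if_neg hc, if_neg hc, smul_zero, sub_zero]
    exact Submodule.zero_mem _

end Induced2

section Quot

variable {k : Type*} [Field k] {G : Type*} [Group G] [DecidableEq G]
  (ω : G → G → G → kˣ) (H : Subgroup G)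
  {V : Type*} [AddCommGroup V] [Module k V] (S : YDOn k (resCocycle ω H) V)
  [Fintype ↥H]

/-- The grading of the induced module. -/
noncomputable def indGrading (d : G) : Submodule k (IndCarrier ω H S) :=
  Submodule.span k
    {x | ∃ (g : G) (e : ↥H) (v : V), v ∈ S.grading e ∧ g * ↑e * g⁻¹ = d ∧
      x = jgen ω H S g v}

/-- The action of the induced module. -/
noncomputable def indAct (hω : IsCocycle ω) (c : G) :
    IndCarrier ω H S →ₗ[k] IndCarrier ω H S :=
  Submodule.mapQ _ _ (rAct ω H S c)
    (Submodule.map_le_iff_le_comap.mp (rAct_rel ω H S hω c))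

/-- The degree-`dd` projection of the induced module. -/
noncomputable def indPi (dd : G) : IndCarrier ω H S →ₗ[k] IndCarrier ω H S :=
  Submodule.mapQ _ _ (rPr ω H S dd)
    (Submodule.map_le_iff_le_comap.mp (rPr_rel ω H S dd))

lemma indAct_jgen (hω : IsCocycle ω) (c g : G) {e : ↥H} {v : V} (hv : v ∈ S.grading e) :
    indAct ω H S hω c (jgen ω H S g v)
      = ((tauc ω c g ↑e : kˣ) : k) • jgen ω H S (c * g) v := by
  rw [jgen, indAct, Submodule.mapQ_apply, rAct_single_hom ω H S c g hv,
    Submodule.Quotient.mk_smul]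
  rfl

lemma indPi_jgen (dd g : G) {e : ↥H} {v : V} (hv : v ∈ S.grading e) :
    indPi ω H S dd (jgen ω H S g v)
      = if g * ↑e * g⁻¹ = dd then jgen ω H S g v else 0 := by
  rw [jgen, indPi, Submodule.mapQ_apply, rPr_single_hom ω H S dd g hv]
  split_ifs with h
  · rfl
  · exact Submodule.Quotient.mk_zero _

lemma mem_indGrading_jgen (g : G) (e : ↥H) {v : V} (hv : v ∈ S.grading e) :
    jgen ω H S g v ∈ indGrading ω H S (g * ↑e * g⁻¹) :=
  Submodule.subset_span ⟨g, e, v, hv, rfl, rfl⟩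

lemma indPi_fix (dd : G) : ∀ x ∈ indGrading ω H S dd, indPi ω H S dd x = x := by
  intro x hx
  induction hx using Submodule.span_induction with
  | mem x hx =>
    obtain ⟨g, e, v, hv, hd, rfl⟩ := hx
    rw [indPi_jgen ω H S dd g hv, if_pos hd]
  | zero => simp
  | add x y _ _ hx hy => rw [map_add, hx, hy]
  | smul a x _ hx => rw [map_smul, hx]

lemma indPi_kill {dd j : G} (hne : j ≠ dd) :
    indGrading ω H S j ≤ LinearMap.ker (indPi ω H S dd) := by
  rw [indGrading, Submodule.span_le]
  rintro x ⟨g, e, v, hv, hd, rfl⟩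
  simp only [SetLike.mem_coe, LinearMap.mem_ker]
  rw [indPi_jgen ω H S dd g hv, if_neg (by rw [hd]; exact hne)]

set_option maxHeartbeats 1000000 in
lemma indep : iSupIndep (indGrading ω H S) := by
  intro d
  rw [Submodule.disjoint_def]
  intro x hx hx'
  have hker : (⨆ j, ⨆ (_ : j ≠ d), indGrading ω H S j) ≤ LinearMap.ker (indPi ω H S d) :=
    iSup_le fun j => iSup_le fun hj => indPi_kill ω H S hj
  have h2 : indPi ω H S d x = 0 := hker hx'
  rw [← indPi_fix ω H S d x hx, h2]

set_option maxHeartbeats 1000000 in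
lemma sup_eq_top : ⨆ d, indGrading ω H S d = ⊤ := by
  rw [eq_top_iff]
  rintro x -
  obtain ⟨f, rfl⟩ := Submodule.mkQ_surjective (indRel ω H S) x
  induction f using Finsupp.induction_linear with
  | zero =>
    rw [map_zero]
    exact Submodule.zero_mem _
  | add f g hf hg =>
    rw [map_add]
    exact Submodule.add_mem _ hf hg
  | single a b =>
    have hs : Finsupp.single a b = ∑ e : ↥H, Finsupp.single a (pr S e b) := by
      conv_lhs => rw [← sum_pr S b]
      exact Finsupp.single_finset_sum _ _ _
    have hmk : (indRel ω H S).mkQ (Finsupp.single a b)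
        = ∑ e : ↥H, jgen ω H S a (pr S e b) := by
      rw [hs, map_sum]
      rfl
    rw [hmk]
    refine Submodule.sum_mem _ fun e _ => ?_
    exact le_iSup (indGrading ω H S) (a * ↑e * a⁻¹)
      (mem_indGrading_jgen ω H S a e (pr_mem S e b))

set_option maxHeartbeats 1000000 in
lemma indAct_one (hω : IsCocycle ω) (hnorm : IsNormalized ω) :
    indAct ω H S hω 1 = LinearMap.id := by
  apply Submodule.linearMap_qext
  apply Finsupp.lhom_ext
  intro g v
  simp only [LinearMap.comp_apply, Submodule.mkQ_apply, LinearMap.id_apply]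
  have hsum : ∑ e : ↥H, ((tauc ω 1 g ↑e : kˣ) : k) • pr S e v = v := by
    rw [Finset.sum_congr rfl fun e _ => by
      rw [tauc_one_left hnorm, Units.val_one, one_smul]]
    exact sum_pr S v
  rw [indAct, Submodule.mapQ_apply, rAct_single ω H S 1 g v, one_mul, hsum]

lemma indAct_mem (hω : IsCocycle ω) (c d : G) :
    ∀ x ∈ indGrading ω H S d, indAct ω H S hω c x ∈ indGrading ω H S (c * d * c⁻¹) := by
  intro x hx
  induction hx using Submodule.span_induction with
  | mem x hx =>
    obtain ⟨g, e, v, hv, hd, rfl⟩ := hx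
    rw [indAct_jgen ω H S hω c g hv]
    exact Submodule.smul_mem _ _
      (Submodule.subset_span ⟨c * g, e, v, hv, by rw [← hd]; group, rfl⟩)
  | zero => simpa using Submodule.zero_mem _
  | add x y _ _ hx hy =>
    rw [map_add]
    exact Submodule.add_mem _ hx hy
  | smul a x _ hx =>
    rw [map_smul]
    exact Submodule.smul_mem _ _ hx

lemma indAct_act (hω : IsCocycle ω) (h g d : G) :
    ∀ x ∈ indGrading ω H S d,
      indAct ω H S hω h (indAct ω H S hω g x)
        = ((tauc ω h g d : kˣ) : k) • indAct ω H S hω (h * g) x := by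
  intro x hx
  induction hx using Submodule.span_induction with
  | mem x hx =>
    obtain ⟨g₀, e, v, hv, hd, rfl⟩ := hx
    rw [indAct_jgen ω H S hω g g₀ hv, map_smul, indAct_jgen ω H S hω h (g * g₀) hv,
      indAct_jgen ω H S hω (h * g) g₀ hv, smul_smul, smul_smul,
      ← mul_assoc h g g₀]
    subst hd
    congr 1
    have h0 := starK (k := k) hω h g g₀ ↑e
    linear_combination -h0
  | zero => simp
  | add x y _ _ hx hy => rw [map_add, map_add, map_add, hx, hy, smul_add]
  | smul a x _ hx =>
    rw [map_smul, map_smul, map_smul, hx, smul_comm]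

end Quot

end DWAux

/-- Lemma 3.7: for a subgroup `H ≤ G` and a twisted Yetter–Drinfeld module
`V` over `(H, ω|_H)`, the induced space `I(V) = kG ⊗ V` modulo the relations
`g h ⊗ v_d = τ(g,h)(d)⁻¹ g ⊗ (h·v_d)` carries a well-defined twisted Yetter–Drinfeld module
structure over `(G, ω)`, with `deg (g ⊗ v_d) = g d g⁻¹` and
`c ⊳ (g ⊗ v_d) = τ(c,g)(d) (cg ⊗ v_d)`. -/
theorem induced_welldefined {k : Type*} [Field k] [IsAlgClosed k] {G : Type*} [Group G]
    [Finite G] [DecidableEq G] (ω : G → G → G → kˣ)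
    (hω : IsCocycle ω) (hnorm : IsNormalized ω) (H : Subgroup G)
    (V : Type*) [AddCommGroup V] [Module k V] (S : YDOn k (resCocycle ω H) V) :
    ∃ T : YDOn k ω (IndCarrier ω H S), IsIndStruct ω H S T := by
  letI : Fintype ↥H := Fintype.ofFinite ↥H
  refine ⟨YDOn.mk (DWAux.indGrading ω H S)
      ((DirectSum.isInternal_submodule_iff_iSupIndep_and_iSup_eq_top _).mpr
        ⟨DWAux.indep ω H S, DWAux.sup_eq_top ω H S⟩)
      (fun c => DWAux.indAct ω H S hω c)
      (DWAux.indAct_one ω H S hω hnorm)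
      (fun g d v hv => DWAux.indAct_mem ω H S hω g d v hv)
      (fun h g d v hv => DWAux.indAct_act ω H S hω h g d v hv),
    fun d => rfl, fun c g e v hv => DWAux.indAct_jgen ω H S hω c g hv⟩
end

section
/- The natural transformation ν_{V,W} : I(V⊗W) → I(V)⊗I(W) given by g⊗(v_d⊗w_f) ↦ γ(g)(d,f)·(g⊗v_d)⊗(g⊗w_f), together with the counit I(1) → 1, g⊗1 ↦ 1, equips the induction functor I : Z(Vect_H^ω) → Z(Vect_G^ω) with an oplax monoidal structure: each ν_{V,W} is a morphism of twisted Yetter–Drinfeld modules over (G,ω), and the oplax associativity and counitality coherence conditions hold. -/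
open scoped TensorProduct

open DW

/-! ### Auxiliary lemmas for the proof -/

namespace DWAux

open DW

section Norm

variable {G : Type*} [Group G] {M : Type*} [CommGroup M]

lemma gamc_one_left (ω : G → G → G → M) (hnorm : IsNormalized ω) (g x : G) :
    gamc ω g 1 x = 1 := by
  have h1 : g * 1 * g⁻¹ = 1 := by group
  rw [gamc, h1, hnorm g 1 x (Or.inr (Or.inl rfl)), hnorm 1 (g * x * g⁻¹) g (Or.inl rfl),
    hnorm 1 g x (Or.inl rfl)]
  simp

lemma gamc_one_right (ω : G → G → G → M) (hnorm : IsNormalized ω) (g x : G) :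
    gamc ω g x 1 = 1 := by
  have h1 : g * 1 * g⁻¹ = 1 := by group
  rw [gamc, h1, hnorm g x 1 (Or.inr (Or.inr rfl)),
    hnorm (g * x * g⁻¹) 1 g (Or.inr (Or.inl rfl)),
    hnorm (g * x * g⁻¹) g 1 (Or.inr (Or.inr rfl))]
  simp

end Norm

section Ind

variable {k : Type*} [Field k] {G : Type*} [Group G] [DecidableEq G]
variable (ω : G → G → G → kˣ) (H : Subgroup G)
variable {V : Type*} [AddCommGroup V] [Module k V]

/-- `jgen` as a linear map in the vector variable. -/
noncomputable def jgenL (S : YDOn k (resCocycle ω H) V) (g : G) :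
    V →ₗ[k] IndCarrier ω H S :=
  (indRel ω H S).mkQ ∘ₗ Finsupp.lsingle g

lemma jgenL_apply (S : YDOn k (resCocycle ω H) V) (g : G) (v : V) :
    jgenL ω H S g v = jgen ω H S g v := rfl

lemma jgen_smul (S : YDOn k (resCocycle ω H) V) (g : G) (c : k) (v : V) :
    jgen ω H S g (c • v) = c • jgen ω H S g v := by
  rw [← jgenL_apply, ← jgenL_apply, map_smul]

lemma jgen_zero (S : YDOn k (resCocycle ω H) V) (g : G) :
    jgen ω H S g (0 : V) = 0 := by
  rw [← jgenL_apply, map_zero]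

/-- Extensionality: two linear maps out of `I(V)` agree if they agree on all
`g ⊗ v` with `v` homogeneous. -/
lemma jgen_ext (S : YDOn k (resCocycle ω H) V)
    {N : Type*} [AddCommGroup N] [Module k N]
    {F₁ F₂ : IndCarrier ω H S →ₗ[k] N}
    (hyp : ∀ (g : G) (e : ↥H), ∀ v ∈ S.grading e,
      F₁ (jgen ω H S g v) = F₂ (jgen ω H S g v)) : F₁ = F₂ := by
  refine Submodule.linearMap_qext _ ?_
  refine Finsupp.lhom_ext' fun g => ?_
  have htop : (⊤ : Submodule k V) ≤
      LinearMap.eqLocus ((F₁ ∘ₗ (indRel ω H S).mkQ) ∘ₗ Finsupp.lsingle g)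
        ((F₂ ∘ₗ (indRel ω H S).mkQ) ∘ₗ Finsupp.lsingle g) := by
    rw [← S.internal.submodule_iSup_eq_top]
    exact iSup_le fun e v hv => hyp g e v hv
  ext v
  exact htop trivial

end Ind


section Tensor

variable {k : Type*} [Field k] {G' : Type*} [Group G'] [DecidableEq G']
variable {ω' : G' → G' → G' → kˣ}
variable {V W : Type*} [AddCommGroup V] [Module k V] [AddCommGroup W] [Module k W]

lemma tensor_grading_le {SV : YDOn k ω' V} {SW : YDOn k ω' W}
    {SVW : YDOn k ω' (V ⊗[k] W)} (hT : IsTensorStruct SV SW SVW)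
    (e : G') {P : Submodule k (V ⊗[k] W)}
    (hyp : ∀ a : G', ∀ x ∈ SV.grading a, ∀ y ∈ SW.grading (a⁻¹ * e), x ⊗ₜ[k] y ∈ P) :
    SVW.grading e ≤ P := by
  rw [hT.1]
  exact iSup_le fun a => Submodule.map₂_le.mpr fun m hm n hn => hyp a m hm n hn

lemma mem_tensor_grading {SV : YDOn k ω' V} {SW : YDOn k ω' W}
    {SVW : YDOn k ω' (V ⊗[k] W)} (hT : IsTensorStruct SV SW SVW)
    {a b : G'} {x : V} {y : W} (hx : x ∈ SV.grading a) (hy : y ∈ SW.grading b) :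
    x ⊗ₜ[k] y ∈ SVW.grading (a * b) := by
  rw [hT.1]
  have : x ⊗ₜ[k] y ∈
      Submodule.map₂ (TensorProduct.mk k V W) (SV.grading a) (SW.grading (a⁻¹ * (a * b))) :=
    Submodule.apply_mem_map₂ _ hx (by simpa using hy)
  exact le_iSup (fun c => Submodule.map₂ (TensorProduct.mk k V W)
    (SV.grading c) (SW.grading (c⁻¹ * (a * b)))) a this

end Tensor

section Ind2

variable {k : Type*} [Field k] {G : Type*} [Group G] [DecidableEq G]
variable (ω : G → G → G → kˣ) (H : Subgroup G)
variable {V : Type*} [AddCommGroup V] [Module k V]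

lemma jgen_mem_grading {S : YDOn k (resCocycle ω H) V} {T : YDOn k ω (IndCarrier ω H S)}
    (hInd : IsIndStruct ω H S T) (g : G) {e : ↥H} {v : V} (hv : v ∈ S.grading e) :
    jgen ω H S g v ∈ T.grading (g * ↑e * g⁻¹) := by
  rw [hInd.1]
  exact Submodule.subset_span ⟨g, e, v, hv, rfl, rfl⟩

lemma ind_tensor_ext {A B : Type*} [AddCommGroup A] [Module k A] [AddCommGroup B] [Module k B]
    {SA : YDOn k (resCocycle ω H) A} {SB : YDOn k (resCocycle ω H) B}
    {SAB : YDOn k (resCocycle ω H) (A ⊗[k] B)} (hT : IsTensorStruct SA SB SAB)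
    {N : Type*} [AddCommGroup N] [Module k N]
    {F₁ F₂ : IndCarrier ω H SAB →ₗ[k] N}
    (hyp : ∀ (g : G) (d f : ↥H), ∀ a ∈ SA.grading d, ∀ b ∈ SB.grading f,
      F₁ (jgen ω H SAB g (a ⊗ₜ[k] b)) = F₂ (jgen ω H SAB g (a ⊗ₜ[k] b))) : F₁ = F₂ := by
  refine jgen_ext ω H SAB fun g e v hv => ?_
  have hle := tensor_grading_le hT e
    (P := LinearMap.eqLocus (F₁ ∘ₗ jgenL ω H SAB g) (F₂ ∘ₗ jgenL ω H SAB g))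
    (fun a x hx y hy => hyp g a (a⁻¹ * e) x hx y hy)
  exact hle hv

end Ind2


section Keys

variable {k : Type*} [Field k] {G : Type*} [Group G]

lemma key2 (ω : G → G → G → kˣ) (hω : IsCocycle ω) (g d e f : G) :
    ((gamc ω g (d*e) f * gamc ω g d e * ω d e f : kˣ) : k)
      = ((ω (g*d*g⁻¹) (g*e*g⁻¹) (g*f*g⁻¹) * gamc ω g d (e*f) * gamc ω g e f : kˣ) : k) := by
  have E1 := congrArg (Units.val) (hω g d e f)
  have E2 := congrArg (Units.val) (hω (g*d*g⁻¹) g e f)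
  have E3 := congrArg (Units.val) (hω (g*d*g⁻¹) (g*e*g⁻¹) g f)
  have E4 := congrArg (Units.val) (hω (g*d*g⁻¹) (g*e*g⁻¹) (g*f*g⁻¹) g)
  simp only [gamc, Units.val_mul, Units.val_inv_eq_inv_val] at *
  simp only [mul_assoc, mul_inv_rev, inv_inv, one_mul, mul_one, inv_mul_cancel_left,
    mul_inv_cancel_left, inv_mul_cancel, mul_inv_cancel] at *
  field_simp at E1 E2 E3 E4 ⊢
  linear_combination (norm := skip)
    (-(((ω (g*(d*e)/g) (g*f/g) g : kˣ) : k) * ((ω (g*d/g) (g*e/g) g : kˣ) : k) *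
        ((ω (g*d/g) g (e*f) : kˣ) : k) * ((ω (g*e/g) g f : kˣ) : k))) * E1
    + (((ω (g*(d*e)/g) (g*f/g) g : kˣ) : k) * ((ω (g*d/g) (g*e/g) g : kˣ) : k) *
        ((ω (g*e/g) g f : kˣ) : k) * ((ω g d (e*f) : kˣ) : k)) * E2
    + (-(((ω (g*(d*e)/g) (g*f/g) g : kˣ) : k) * ((ω g d (e*f) : kˣ) : k) *
        ((ω (g*d/g) g e : kˣ) : k) * ((ω g e f : kˣ) : k))) * E3
    + (((ω g d (e*f) : kˣ) : k) * ((ω (g*d/g) g e : kˣ) : k) *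
        ((ω g e f : kˣ) : k) * ((ω (g*(d*e)/g) g f : kˣ) : k)) * E4
  simp only [div_eq_mul_inv, mul_assoc, mul_inv_rev]
  ring1



lemma key1 (ω : G → G → G → kˣ) (hω : IsCocycle ω) (h g d f : G) :
    ((tauc ω h g (d*f) * gamc ω (h*g) d f : kˣ) : k)
      = ((gamc ω g d f * gamc ω h (g*d*g⁻¹) (g*f*g⁻¹) * tauc ω h g d * tauc ω h g f : kˣ) : k) := by
  have E1 := congrArg (Units.val) (hω h g d f)
  have E2 := congrArg (Units.val) (hω h (g*d*g⁻¹) g f)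
  have E3 := congrArg (Units.val) (hω h (g*d*g⁻¹) (g*f*g⁻¹) g)
  have E4 := congrArg (Units.val) (hω (h*g*d*(h*g)⁻¹) h g f)
  have E5 := congrArg (Units.val) (hω (h*g*d*(h*g)⁻¹) h (g*f*g⁻¹) g)
  have E6 := congrArg (Units.val) (hω (h*g*d*(h*g)⁻¹) (h*g*f*(h*g)⁻¹) h g)
  simp only [tauc, gamc, Units.val_mul, Units.val_inv_eq_inv_val] at *
  simp only [mul_assoc, mul_inv_rev, inv_inv, one_mul, mul_one, inv_mul_cancel_left,
    mul_inv_cancel_left, inv_mul_cancel, mul_inv_cancel] at *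
  field_simp at E1 E2 E3 E4 E5 E6 ⊢
  linear_combination (norm := skip)
    (((ω h (g * d / g) g : kˣ) : k) * ((ω (g * d / g) g f : kˣ) : k) * ((ω (h * (g * d) / g / h) h (g * f / g) : kˣ) : k) * ((ω h (g * f / g) g : kˣ) : k) * ((ω (h * (g * (d * f)) / g / h) h g : kˣ) : k) * ((ω (h * (g * d) / g / h) (h * (g * f) / g / h) (h * g) : kˣ) : k)) * E1
    - (((ω h g d : kˣ) : k) * ((ω g d f : kˣ) : k) * ((ω (h * (g * d) / g / h) h (g * f / g) : kˣ) : k) * ((ω h (g * f / g) g : kˣ) : k) * ((ω (h * (g * (d * f)) / g / h) h g : kˣ) : k) * ((ω (h * (g * d) / g / h) (h * (g * f) / g / h) (h * g) : kˣ) : k)) * E2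
    + (((ω h g d : kˣ) : k) * ((ω g d f : kˣ) : k) * ((ω (h * (g * d) / g) g f : kˣ) : k) * ((ω h (g * d / g) (g * f) : kˣ) : k) * ((ω (h * (g * d) / g / h) h (g * f / g) : kˣ) : k) * ((ω h (g * f / g) g : kˣ) : k)) * E6
    - (((ω h g d : kˣ) : k) * ((ω g d f : kˣ) : k) * ((ω (h * (g * d) / g) g f : kˣ) : k) * ((ω h (g * d / g) (g * f) : kˣ) : k) * ((ω (h * (g * d) / g / h) (h * (g * f) / g / h) h : kˣ) : k) * ((ω (h * (g * f) / g / h) h g : kˣ) : k)) * E5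
    + (((ω h g d : kˣ) : k) * ((ω g d f : kˣ) : k) * ((ω (h * (g * d) / g) g f : kˣ) : k) * ((ω (h * (g * d) / g / h) h (g * f) : kˣ) : k) * ((ω (h * (g * d) / g / h) (h * (g * f) / g / h) h : kˣ) : k) * ((ω (h * (g * f) / g / h) h g : kˣ) : k)) * E3
    + (((ω h g d : kˣ) : k) * ((ω g d f : kˣ) : k) * ((ω h (g * d / g) (g * f / g) : kˣ) : k) * ((ω h (g * (d * f) / g) g : kˣ) : k) * ((ω (g * d / g) (g * f / g) g : kˣ) : k) * ((ω (h * (g * d) / g / h) (h * (g * f) / g / h) h : kˣ) : k) * ((ω (h * (g * f) / g / h) h g : kˣ) : k)) * E4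
  simp only [div_eq_mul_inv, mul_assoc, mul_inv_rev]
  ring1



end Keys

end DWAux

set_option maxHeartbeats 1000000 in
/-- Lemma 3.8: the natural transformation
`ν_{V,W}(g ⊗ (v_d ⊗ w_f)) = γ(g)(d,f) (g⊗v_d) ⊗ (g⊗w_f)`, together with the counit
`I(1) → 1, g⊗1 ↦ 1`, equips the induction functor `I : Z(Vect_H^ω) → Z(Vect_G^ω)` with an
oplax monoidal structure: each `ν_{V,W}` is a morphism of twisted Yetter–Drinfeld modules
over `(G,ω)` and the oplax associativity and counitality coherence conditions hold. -/
theorem induction_oplax {k : Type*} [Field k] [IsAlgClosed k] {G : Type*} [Group G]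
    [Finite G] [DecidableEq G] (ω : G → G → G → kˣ)
    (hω : IsCocycle ω) (hnorm : IsNormalized ω) (H : Subgroup G) :
    -- ν_{V,W} is a morphism of twisted Yetter–Drinfeld modules over (G, ω)
    (∀ (V W : Type) [AddCommGroup V] [Module k V] [AddCommGroup W] [Module k W]
        (SV : YDOn k (resCocycle ω H) V) (SW : YDOn k (resCocycle ω H) W)
        (SVW : YDOn k (resCocycle ω H) (V ⊗[k] W)), IsTensorStruct SV SW SVW →
      ∀ (TV : YDOn k ω (IndCarrier ω H SV)) (TW : YDOn k ω (IndCarrier ω H SW))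
        (TVW : YDOn k ω (IndCarrier ω H SVW)),
        IsIndStruct ω H SV TV → IsIndStruct ω H SW TW → IsIndStruct ω H SVW TVW →
      ∀ (Tt : YDOn k ω (IndCarrier ω H SV ⊗[k] IndCarrier ω H SW)),
        IsTensorStruct TV TW Tt →
      ∀ ν : IndCarrier ω H SVW →ₗ[k] IndCarrier ω H SV ⊗[k] IndCarrier ω H SW,
        IsNuMap ω H SV SW SVW ν → IsYDHom TVW Tt ν) ∧
    -- oplax associativity coherence
    (∀ (V W U : Type) [AddCommGroup V] [Module k V] [AddCommGroup W] [Module k W]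
        [AddCommGroup U] [Module k U]
        (SV : YDOn k (resCocycle ω H) V) (SW : YDOn k (resCocycle ω H) W)
        (SU : YDOn k (resCocycle ω H) U)
        (SVW : YDOn k (resCocycle ω H) (V ⊗[k] W)) (_ : IsTensorStruct SV SW SVW)
        (SWU : YDOn k (resCocycle ω H) (W ⊗[k] U)) (_ : IsTensorStruct SW SU SWU)
        (SVW_U : YDOn k (resCocycle ω H) ((V ⊗[k] W) ⊗[k] U))
        (_ : IsTensorStruct SVW SU SVW_U)
        (SV_WU : YDOn k (resCocycle ω H) (V ⊗[k] (W ⊗[k] U)))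
        (_ : IsTensorStruct SV SWU SV_WU)
        (αH : (V ⊗[k] W) ⊗[k] U →ₗ[k] V ⊗[k] (W ⊗[k] U)) (_ : IsAssocMap SV SW SU αH)
        (TV : YDOn k ω (IndCarrier ω H SV)) (_ : IsIndStruct ω H SV TV)
        (TW : YDOn k ω (IndCarrier ω H SW)) (_ : IsIndStruct ω H SW TW)
        (TU : YDOn k ω (IndCarrier ω H SU)) (_ : IsIndStruct ω H SU TU)
        (Iα : IndCarrier ω H SVW_U →ₗ[k] IndCarrier ω H SV_WU)
        (_ : IsIndMap ω H SVW_U SV_WU αH Iα)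
        (ν₂ : IndCarrier ω H SVW_U →ₗ[k] IndCarrier ω H SVW ⊗[k] IndCarrier ω H SU)
        (_ : IsNuMap ω H SVW SU SVW_U ν₂)
        (ν₁ : IndCarrier ω H SVW →ₗ[k] IndCarrier ω H SV ⊗[k] IndCarrier ω H SW)
        (_ : IsNuMap ω H SV SW SVW ν₁)
        (ν₄ : IndCarrier ω H SV_WU →ₗ[k] IndCarrier ω H SV ⊗[k] IndCarrier ω H SWU)
        (_ : IsNuMap ω H SV SWU SV_WU ν₄)
        (ν₃ : IndCarrier ω H SWU →ₗ[k] IndCarrier ω H SW ⊗[k] IndCarrier ω H SU)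
        (_ : IsNuMap ω H SW SU SWU ν₃)
        (αG : (IndCarrier ω H SV ⊗[k] IndCarrier ω H SW) ⊗[k] IndCarrier ω H SU →ₗ[k]
            IndCarrier ω H SV ⊗[k] (IndCarrier ω H SW ⊗[k] IndCarrier ω H SU)),
        IsAssocMap TV TW TU αG →
        αG ∘ₗ TensorProduct.map ν₁ LinearMap.id ∘ₗ ν₂
          = TensorProduct.map LinearMap.id ν₃ ∘ₗ ν₄ ∘ₗ Iα) ∧
    -- oplax counitality coherence (left and right)
    (∀ (V : Type) [AddCommGroup V] [Module k V]
        (SV : YDOn k (resCocycle ω H) V)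
        (S1 : YDOn k (resCocycle ω H) k) (_ : IsUnitStruct S1)
        (εI : IndCarrier ω H S1 →ₗ[k] k) (_ : IsCounitMap ω H S1 εI)
        (S1V : YDOn k (resCocycle ω H) (k ⊗[k] V)) (_ : IsTensorStruct S1 SV S1V)
        (SV1 : YDOn k (resCocycle ω H) (V ⊗[k] k)) (_ : IsTensorStruct SV S1 SV1)
        (Ilam : IndCarrier ω H S1V →ₗ[k] IndCarrier ω H SV)
        (_ : IsIndMap ω H S1V SV (TensorProduct.lid k V).toLinearMap Ilam)
        (Irho : IndCarrier ω H SV1 →ₗ[k] IndCarrier ω H SV)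
        (_ : IsIndMap ω H SV1 SV (TensorProduct.rid k V).toLinearMap Irho)
        (νl : IndCarrier ω H S1V →ₗ[k] IndCarrier ω H S1 ⊗[k] IndCarrier ω H SV)
        (_ : IsNuMap ω H S1 SV S1V νl)
        (νr : IndCarrier ω H SV1 →ₗ[k] IndCarrier ω H SV ⊗[k] IndCarrier ω H S1),
        IsNuMap ω H SV S1 SV1 νr →
        (TensorProduct.lid k (IndCarrier ω H SV)).toLinearMap
            ∘ₗ TensorProduct.map εI LinearMap.id ∘ₗ νl = Ilam ∧
        (TensorProduct.rid k (IndCarrier ω H SV)).toLinearMap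
            ∘ₗ TensorProduct.map LinearMap.id εI ∘ₗ νr = Irho) := by
  classical
  refine ⟨?_, ?_, ?_⟩
  · -- Part 1 : ν is a morphism of twisted Yetter–Drinfeld modules
    intro V W _ _ _ _ SV SW SVW hT TV TW TVW hIV hIW hIVW Tt hTt ν hν
    constructor
    · -- grading preservation
      intro dd v hv
      rw [hIVW.1] at hv
      have hset : {x | ∃ (g : G) (e : ↥H) (w : V ⊗[k] W), w ∈ SVW.grading e ∧
          g * ↑e * g⁻¹ = dd ∧ x = jgen ω H SVW g w} ⊆
          ↑((Tt.grading dd).comap ν) := by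
        rintro x ⟨g, e, w, hw, hdeg, rfl⟩
        have hle := DWAux.tensor_grading_le hT e
          (P := ((Tt.grading dd).comap ν).comap (DWAux.jgenL ω H SVW g))
          (fun a p hp q hq => by
            show ν (jgen ω H SVW g (p ⊗ₜ[k] q)) ∈ Tt.grading dd
            rw [hν g a (a⁻¹ * e) p q hp hq]
            refine Submodule.smul_mem _ _ ?_
            rw [hTt.1]
            have hmem : jgen ω H SV g p ⊗ₜ[k] jgen ω H SW g q ∈
                Submodule.map₂ (TensorProduct.mk k (IndCarrier ω H SV) (IndCarrier ω H SW))
                  (TV.grading (g * ↑a * g⁻¹))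
                  (TW.grading ((g * ↑a * g⁻¹)⁻¹ * dd)) := by
              refine Submodule.apply_mem_map₂ _
                (DWAux.jgen_mem_grading ω H hIV g hp) ?_
              have harg : (g * (↑a : G) * g⁻¹)⁻¹ * dd = g * ↑(a⁻¹ * e) * g⁻¹ := by
                rw [← hdeg]
                push_cast
                group
              rw [harg]
              exact DWAux.jgen_mem_grading ω H hIW g hq
            exact le_iSup (fun c => Submodule.map₂
              (TensorProduct.mk k (IndCarrier ω H SV) (IndCarrier ω H SW))
              (TV.grading c) (TW.grading (c⁻¹ * dd))) (g * ↑a * g⁻¹) hmem)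
        exact hle hw
      exact Submodule.span_le.mpr hset hv
    · -- equivariance
      intro cG
      refine DWAux.ind_tensor_ext ω H hT fun g d f a ha b hb => ?_
      have hab : a ⊗ₜ[k] b ∈ SVW.grading (d * f) := DWAux.mem_tensor_grading hT ha hb
      simp only [LinearMap.comp_apply]
      rw [hIVW.2 cG g (d * f) (a ⊗ₜ[k] b) hab, map_smul, hν (cG * g) d f a b ha hb,
        hν g d f a b ha hb, map_smul,
        hTt.2 cG (g * ↑d * g⁻¹) (g * ↑f * g⁻¹) _ _ (DWAux.jgen_mem_grading ω H hIV g ha)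
          (DWAux.jgen_mem_grading ω H hIW g hb),
        hIV.2 cG g d a ha, hIW.2 cG g f b hb]
      simp only [← TensorProduct.smul_tmul', TensorProduct.tmul_smul, smul_smul]
      congr 1
      have hk := DWAux.key1 ω hω cG g (↑d) (↑f)
      push_cast [Units.val_inv_eq_inv_val] at hk ⊢
      linear_combination hk
  · -- Part 2 : oplax associativity coherence
    intro V W U _ _ _ _ _ _ SV SW SU SVW h1 SWU h2 SVW_U h3 SV_WU h4 αH hαH
      TV hIV TW hIW TU hIU Iα hIα ν₂ hν₂ ν₁ hν₁ ν₄ hν₄ ν₃ hν₃ αG hαG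
    refine DWAux.ind_tensor_ext ω H h3 fun g dd f x hx c hc => ?_
    have hle := DWAux.tensor_grading_le h1 dd
      (P := LinearMap.eqLocus
        ((αG ∘ₗ TensorProduct.map ν₁ LinearMap.id ∘ₗ ν₂) ∘ₗ
          (DWAux.jgenL ω H SVW_U g ∘ₗ (TensorProduct.mk k (V ⊗[k] W) U).flip c))
        ((TensorProduct.map LinearMap.id ν₃ ∘ₗ ν₄ ∘ₗ Iα) ∘ₗ
          (DWAux.jgenL ω H SVW_U g ∘ₗ (TensorProduct.mk k (V ⊗[k] W) U).flip c)))
      (fun d a ha b hb => ?_) 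
    · exact hle hx
    · show (αG ∘ₗ TensorProduct.map ν₁ LinearMap.id ∘ₗ ν₂)
          (jgen ω H SVW_U g ((a ⊗ₜ[k] b) ⊗ₜ[k] c))
        = (TensorProduct.map LinearMap.id ν₃ ∘ₗ ν₄ ∘ₗ Iα)
          (jgen ω H SVW_U g ((a ⊗ₜ[k] b) ⊗ₜ[k] c))
      set e : ↥H := d⁻¹ * dd with he
      have hab : a ⊗ₜ[k] b ∈ SVW.grading (d * e) := DWAux.mem_tensor_grading h1 ha hb
      have hbc : b ⊗ₜ[k] c ∈ SWU.grading (e * f) := DWAux.mem_tensor_grading h2 hb hc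
      simp only [LinearMap.comp_apply]
      simp only [hν₂ g (d * e) f (a ⊗ₜ[k] b) c hab hc,
        hIα g ((a ⊗ₜ[k] b) ⊗ₜ[k] c), hαH d e f a b c ha hb hc, DWAux.jgen_smul,
        hν₄ g d (e * f) a (b ⊗ₜ[k] c) ha hbc, map_smul, TensorProduct.map_tmul,
        hν₁ g d e a b ha hb, hν₃ g e f b c hb hc, LinearMap.id_coe, id_eq,
        ← TensorProduct.smul_tmul', TensorProduct.tmul_smul, smul_smul,
        hαG (g * ↑d * g⁻¹) (g * ↑e * g⁻¹) (g * ↑f * g⁻¹) _ _ _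
          (DWAux.jgen_mem_grading ω H hIV g ha) (DWAux.jgen_mem_grading ω H hIW g hb)
          (DWAux.jgen_mem_grading ω H hIU g hc)]
      simp only [resCocycle, smul_smul]
      congr 1
      have hk := DWAux.key2 ω hω g (↑d) (↑e) (↑f)
      push_cast [Units.val_inv_eq_inv_val] at hk ⊢
      field_simp at hk ⊢
      linear_combination hk
  · -- Part 3 : counitality
    intro V _ _ SV S1 hU εI hε S1V h1V SV1 hV1 Ilam hIlam Irho hIrho νl hνl νr hνr
    constructor
    · refine DWAux.ind_tensor_ext ω H h1V fun g d f c hc v hv => ?_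
      simp only [LinearMap.comp_apply]
      by_cases hd : d = 1
      · subst hd
        rw [hνl g 1 f c v hc hv]
        rw [hIlam g (c ⊗ₜ[k] v)]
        simp only [OneMemClass.coe_one, DWAux.gamc_one_left ω hnorm, Units.val_one, one_smul,
          map_smul, TensorProduct.map_tmul, hε g c, LinearMap.id_coe, id_eq,
          TensorProduct.lid_tmul, LinearEquiv.coe_coe, DWAux.jgen_smul]
      · have hbot : c ∈ (⊥ : Submodule k k) := (hU.2.1 d hd) ▸ hc
        rw [Submodule.mem_bot] at hbot
        subst hbot
        simp only [TensorProduct.zero_tmul, DWAux.jgen_zero, map_zero]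
    · refine DWAux.ind_tensor_ext ω H hV1 fun g d f v hv c hc => ?_
      simp only [LinearMap.comp_apply]
      by_cases hf : f = 1
      · subst hf
        rw [hνr g d 1 v c hv hc]
        rw [hIrho g (v ⊗ₜ[k] c)]
        simp only [OneMemClass.coe_one, DWAux.gamc_one_right ω hnorm, Units.val_one, one_smul,
          map_smul, TensorProduct.map_tmul, hε g c, LinearMap.id_coe, id_eq,
          TensorProduct.rid_tmul, LinearEquiv.coe_coe, DWAux.jgen_smul]
      · have hbot : c ∈ (⊥ : Submodule k k) := (hU.2.1 f hf) ▸ hc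
        rw [Submodule.mem_bot] at hbot
        subst hbot
        simp only [TensorProduct.tmul_zero, DWAux.jgen_zero, map_zero]
end

section
/- The natural transformation μ_{V,W} : I(V)⊗I(W) → I(V⊗W) defined by μ_{V,W}((g⊗v_d)⊗(k⊗w_f)) = 0 when g⁻¹k ∉ H and μ_{V,W}((g⊗v_d)⊗(g⊗w_f)) = γ(g)(d,f)⁻¹ g⊗(v_d⊗w_f), together with the unit 1 → I(1) sending 1 to the sum Σ_i g_i⊗1 over a set {g_i} of representatives of the left cosets of H in G, equips the induction functor I : Z(Vect_H^ω) → Z(Vect_G^ω) with a lax monoidal structure: each μ_{V,W} is a morphism of twisted Yetter–Drinfeld modules over (G,ω), and the lax associativity and unitality coherence conditions hold. -/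
open scoped TensorProduct

namespace DW

/-! ### Auxiliary lemmas -/

section AuxCocycle

variable {k : Type*} [Field k] {G : Type*} [Group G] {ω : G → G → G → kˣ}

theorem norm_tauc_right (hnorm : IsNormalized ω) (g h : G) : tauc ω g h 1 = 1 := by
  have h1 : g * h * 1 * (g * h)⁻¹ = 1 := by group
  have h2 : h * 1 * h⁻¹ = 1 := by group
  rw [tauc, h1, h2, hnorm g h 1 (by tauto), hnorm 1 g h (by tauto), hnorm g 1 h (by tauto)]
  simp

theorem norm_gamc_left (hnorm : IsNormalized ω) (h f : G) : gamc ω h 1 f = 1 := by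
  have h1 : h * 1 * h⁻¹ = 1 := by group
  rw [gamc, h1, hnorm h 1 f (by tauto), hnorm 1 (h * f * h⁻¹) h (by tauto),
    hnorm 1 h f (by tauto)]
  simp

theorem norm_gamc_right (hnorm : IsNormalized ω) (h d : G) : gamc ω h d 1 = 1 := by
  have h1 : h * 1 * h⁻¹ = 1 := by group
  rw [gamc, h1, hnorm h d 1 (by tauto), hnorm (h * d * h⁻¹) 1 h (by tauto),
    hnorm (h * d * h⁻¹) h 1 (by tauto)]
  simp

theorem I2aux (hω : IsCocycle ω) (c g e f e' f' e'' f'' : G)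
    (he : g * e = e' * g) (hf : g * f = f' * g)
    (hce : c * e' = e'' * c) (hcf : c * f' = f'' * c)
    (h1 : g * e * g⁻¹ = e') (h2 : g * f * g⁻¹ = f')
    (h3 : c * e' * c⁻¹ = e'') (h4 : c * f' * c⁻¹ = f'')
    (h5 : c * g * e * (c * g)⁻¹ = e'') (h6 : c * g * f * (c * g)⁻¹ = f'')
    (h7 : c * g * (e * f) * (c * g)⁻¹ = e'' * f'')
    (h8 : g * (e * f) * g⁻¹ = e' * f') :
    gamc ω c e' f' * tauc ω c g e * tauc ω c g f * gamc ω g e f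
      = gamc ω (c * g) e f * tauc ω c g (e * f) := by
  have Y1 := hω c g e f
  have Y2 := hω c e' g f
  have Y3 := hω c e' f' g
  have Y4 := hω e'' c g f
  have Y5 := hω e'' c f' g
  have Y6 := hω e'' f'' c g
  rw [he] at Y1
  rw [hf] at Y2
  rw [← hce, hf] at Y4
  rw [← hce, hcf] at Y5
  simp only [gamc, tauc]
  rw [h1, h2, h3, h4, h5, h6, h7, h8]
  have hE : (ω (c*g) e f * ω c g (e*f)) * (ω c e' g * ω c (e'*g) f * ω e' g f)
      * (ω (c*e') f' g * ω c e' (f'*g)) * (ω (c*e') g f * ω e'' c (f'*g))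
      * (ω e'' c f' * ω e'' (f''*c) g * ω c f' g) * (ω (e''*f'') c g * ω e'' f'' (c*g))
      = (ω c g e * ω c (e'*g) f * ω g e f) * (ω (c*e') g f * ω c e' (f'*g))
      * (ω c e' f' * ω c (e'*f') g * ω e' f' g) * (ω e'' c g * ω e'' (c*g) f * ω c g f)
      * (ω (c*e') f' g * ω e'' c (f'*g)) * (ω e'' f'' c * ω e'' (f''*c) g * ω f'' c g) := by
    rw [Y1, Y2, Y3, Y4, Y5, Y6]
  refine mul_right_cancel (b := (ω (c*g) e f * ω c g (e*f)) * (ω c e' g * ω c (e'*g) f * ω e' g f)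
      * (ω (c*e') f' g * ω c e' (f'*g)) * (ω (c*e') g f * ω e'' c (f'*g))
      * (ω e'' c f' * ω e'' (f''*c) g * ω c f' g) * (ω (e''*f'') c g * ω e'' f'' (c*g))) ?_
  conv_rhs => rw [hE]
  rw [Units.ext_iff]
  push_cast
  field_simp

theorem I3aux (hω : IsCocycle ω) (g d e f d' e' f' : G)
    (hd : g * d = d' * g) (he : g * e = e' * g) (hf : g * f = f' * g)
    (h1 : g * d * g⁻¹ = d') (h2 : g * e * g⁻¹ = e') (h3 : g * f * g⁻¹ = f')
    (h4 : g * (d * e) * g⁻¹ = d' * e') (h5 : g * (e * f) * g⁻¹ = e' * f') :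
    gamc ω g d e * gamc ω g (d * e) f * ω d e f
      = ω d' e' f' * gamc ω g e f * gamc ω g d (e * f) := by
  have X1 := hω g d e f
  have X2 := hω d' g e f
  have X3 := hω d' e' g f
  have X4 := hω d' e' f' g
  rw [← hd] at X2
  rw [← he, hf] at X3
  simp only [gamc]
  rw [h1, h2, h3, h4, h5]
  have hE : (ω (g*d) e f * ω g d (e*f)) * (ω d' g e * ω d' (g*e) f * ω g e f)
      * (ω (d'*e') g f * ω d' e' (f'*g)) * (ω d' e' f' * ω d' (e'*f') g * ω e' f' g)
      = (ω g d e * ω g (d*e) f * ω d e f) * (ω (g*d) e f * ω d' g (e*f))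
      * (ω d' e' g * ω d' (g*e) f * ω e' g f) * (ω (d'*e') f' g * ω d' e' (f'*g)) := by
    rw [X1, X2, X3, X4]
  refine mul_right_cancel (b := (ω (g*d) e f * ω g d (e*f)) * (ω d' g e * ω d' (g*e) f * ω g e f)
      * (ω (d'*e') g f * ω d' e' (f'*g)) * (ω d' e' f' * ω d' (e'*f') g * ω e' f' g)) ?_
  conv_rhs => rw [hE]
  rw [Units.ext_iff]
  push_cast
  field_simp

theorem I2u (hω : IsCocycle ω) (c g e f : G) :
    gamc ω c (g*e*g⁻¹) (g*f*g⁻¹) * tauc ω c g e * tauc ω c g f * gamc ω g e f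
      = gamc ω (c * g) e f * tauc ω c g (e * f) :=
  I2aux hω c g e f (g*e*g⁻¹) (g*f*g⁻¹) (c*(g*e*g⁻¹)*c⁻¹) (c*(g*f*g⁻¹)*c⁻¹)
    (by group) (by group) (by group) (by group) (by group) (by group)
    (by group) (by group) (by group) (by group) (by group) (by group)

theorem I3u (hω : IsCocycle ω) (g d e f : G) :
    gamc ω g d e * gamc ω g (d * e) f * ω d e f
      = ω (g*d*g⁻¹) (g*e*g⁻¹) (g*f*g⁻¹) * gamc ω g e f * gamc ω g d (e * f) :=
  I3aux hω g d e f (g*d*g⁻¹) (g*e*g⁻¹) (g*f*g⁻¹)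
    (by group) (by group) (by group) (by group) (by group) (by group) (by group) (by group)

theorem I2k (hω : IsCocycle ω) (c g e f : G) :
    ((gamc ω c (g*e*g⁻¹) (g*f*g⁻¹) : kˣ) : k) * ((tauc ω c g e : kˣ) : k)
      * ((tauc ω c g f : kˣ) : k) * (((gamc ω (c * g) e f)⁻¹ : kˣ) : k)
      = (((gamc ω g e f)⁻¹ : kˣ) : k) * ((tauc ω c g (e * f) : kˣ) : k) := by
  have h := I2u hω c g e f
  rw [Units.ext_iff] at h
  push_cast at h ⊢
  field_simp at h ⊢
  linear_combination h

theorem I3k (hω : IsCocycle ω) (g d e f : G) :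
    (((ω (g*d*g⁻¹) (g*e*g⁻¹) (g*f*g⁻¹))⁻¹ : kˣ) : k) * (((gamc ω g e f)⁻¹ : kˣ) : k)
      * (((gamc ω g d (e * f))⁻¹ : kˣ) : k)
      = (((gamc ω g d e)⁻¹ : kˣ) : k) * (((gamc ω g (d * e) f)⁻¹ : kˣ) : k)
      * (((ω d e f)⁻¹ : kˣ) : k) := by
  have h := I3u hω g d e f
  rw [Units.ext_iff] at h
  push_cast at h ⊢
  field_simp at h ⊢
  linear_combination h

end AuxCocycle

section AuxTensor

variable {k : Type*} [Field k]

theorem span_tmul_top {M N : Type*} [AddCommGroup M] [Module k M] [AddCommGroup N] [Module k N]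
    {s : Set M} {t : Set N} (hs : Submodule.span k s = ⊤) (ht : Submodule.span k t = ⊤) :
    Submodule.span k {z : M ⊗[k] N | ∃ x ∈ s, ∃ y ∈ t, z = x ⊗ₜ[k] y} = ⊤ := by
  rw [eq_top_iff, ← TensorProduct.span_tmul_eq_top, Submodule.span_le]
  rintro z ⟨m, n, rfl⟩
  have hm : m ∈ Submodule.span k s := hs ▸ Submodule.mem_top
  have hn : n ∈ Submodule.span k t := ht ▸ Submodule.mem_top
  induction hm using Submodule.span_induction with
  | mem x hx =>
    induction hn using Submodule.span_induction with
    | mem y hy => exact Submodule.subset_span ⟨x, hx, y, hy, rfl⟩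
    | zero => rw [TensorProduct.tmul_zero]; exact zero_mem _
    | add a b _ _ iha ihb => rw [TensorProduct.tmul_add]; exact add_mem iha ihb
    | smul c a _ ih => rw [TensorProduct.tmul_smul]; exact Submodule.smul_mem _ _ ih
  | zero => rw [TensorProduct.zero_tmul]; exact zero_mem _
  | add a b _ _ iha ihb => rw [TensorProduct.add_tmul]; exact add_mem iha ihb
  | smul c a _ ih => rw [← TensorProduct.smul_tmul']; exact Submodule.smul_mem _ _ ih

theorem ext_of_spans {M N P : Type*} [AddCommGroup M] [Module k M] [AddCommGroup N] [Module k N]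
    [AddCommGroup P] [Module k P] {s : Set M} {t : Set N}
    (hs : Submodule.span k s = ⊤) (ht : Submodule.span k t = ⊤)
    {F1 F2 : M ⊗[k] N →ₗ[k] P}
    (h : ∀ x ∈ s, ∀ y ∈ t, F1 (x ⊗ₜ[k] y) = F2 (x ⊗ₜ[k] y)) : F1 = F2 := by
  apply TensorProduct.curry_injective
  apply LinearMap.ext_on hs
  intro x hx
  apply LinearMap.ext_on ht
  intro y hy
  simpa using h x hx y hy

theorem tmul_mem_tensorStruct {G' : Type*} [Group G'] [DecidableEq G'] {ω' : G' → G' → G' → kˣ}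
    {A B : Type*} [AddCommGroup A] [Module k A] [AddCommGroup B] [Module k B]
    {SA : YDOn k ω' A} {SB : YDOn k ω' B} {SAB : YDOn k ω' (A ⊗[k] B)}
    (hT : IsTensorStruct SA SB SAB) {a b : G'} {x : A} {y : B}
    (hx : x ∈ SA.grading a) (hy : y ∈ SB.grading b) : x ⊗ₜ[k] y ∈ SAB.grading (a * b) := by
  rw [hT.1]
  have hmem : x ⊗ₜ[k] y ∈ Submodule.map₂ (TensorProduct.mk k A B) (SA.grading a)
      (SB.grading (a⁻¹ * (a * b))) := by
    rw [inv_mul_cancel_left]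
    exact Submodule.apply_mem_map₂ _ hx hy
  exact le_iSup (fun c => Submodule.map₂ (TensorProduct.mk k A B) (SA.grading c)
    (SB.grading (c⁻¹ * (a * b)))) a hmem

end AuxTensor

section AuxInd

variable {k : Type*} [Field k] {G : Type*} [Group G] [DecidableEq G]
variable (ω : G → G → G → kˣ) (H : Subgroup G)
variable {V : Type*} [AddCommGroup V] [Module k V]

/-- `jgen` as a linear map in `v`. -/
noncomputable def jlin (S : YDOn k (resCocycle ω H) V) (g : G) : V →ₗ[k] IndCarrier ω H S :=
  (indRel ω H S).mkQ ∘ₗ Finsupp.lsingle g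

theorem jlin_apply (S : YDOn k (resCocycle ω H) V) (g : G) (v : V) :
    jlin ω H S g v = jgen ω H S g v := rfl

theorem jgen_smul (S : YDOn k (resCocycle ω H) V) (g : G) (c : k) (v : V) :
    jgen ω H S g (c • v) = c • jgen ω H S g v := by
  rw [← jlin_apply, ← jlin_apply, map_smul]

theorem jgen_rel (S : YDOn k (resCocycle ω H) V) (g : G) (h e : ↥H) {v : V}
    (hv : v ∈ S.grading e) :
    jgen ω H S (g * ↑h) v = (((tauc ω g ↑h ↑e)⁻¹ : kˣ) : k) • jgen ω H S g (S.act h v) := by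
  rw [jgen, jgen, ← Submodule.Quotient.mk_smul, Submodule.Quotient.eq]
  exact Submodule.subset_span ⟨g, h, e, v, hv, rfl⟩

theorem jgen_span (S : YDOn k (resCocycle ω H) V) :
    Submodule.span k {x : IndCarrier ω H S |
      ∃ (g : G) (e : ↥H) (v : V), v ∈ S.grading e ∧ x = jgen ω H S g v} = ⊤ := by
  rw [eq_top_iff]
  rintro x -
  obtain ⟨y, rfl⟩ := Submodule.Quotient.mk_surjective _ x
  induction y using Finsupp.induction with
  | zero =>
    rw [Submodule.Quotient.mk_zero]
    exact zero_mem _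
  | single_add g v y _ _ ih =>
    rw [Submodule.Quotient.mk_add]
    refine add_mem ?_ ih
    have hv' : v ∈ ⨆ e : ↥H, S.grading e := by
      rw [S.internal.submodule_iSup_eq_top]; trivial
    refine Submodule.iSup_induction (motive := fun w =>
      (Submodule.Quotient.mk (Finsupp.single g w) : IndCarrier ω H S) ∈
        Submodule.span k {x : IndCarrier ω H S |
          ∃ (g : G) (e : ↥H) (v : V), v ∈ S.grading e ∧ x = jgen ω H S g v})
      _ hv' ?_ ?_ ?_
    · intro e w hw
      exact Submodule.subset_span ⟨g, e, w, hw, rfl⟩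
    · show (Submodule.Quotient.mk (Finsupp.single g (0 : V)) : IndCarrier ω H S) ∈ _
      rw [Finsupp.single_zero, Submodule.Quotient.mk_zero]
      exact zero_mem _
    · intro a b ha hb
      show (Submodule.Quotient.mk (Finsupp.single g (a + b)) : IndCarrier ω H S) ∈ _
      rw [Finsupp.single_add, Submodule.Quotient.mk_add]
      exact add_mem ha hb

theorem jgen_mem_grading {S : YDOn k (resCocycle ω H) V} {T : YDOn k ω (IndCarrier ω H S)}
    (hT : IsIndStruct ω H S T) (g : G) (e : ↥H) {v : V} (hv : v ∈ S.grading e) :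
    jgen ω H S g v ∈ T.grading (g * ↑e * g⁻¹) := by
  rw [hT.1]
  exact Submodule.subset_span ⟨g, e, v, hv, rfl, rfl⟩

end AuxInd

end DW

open DW

set_option maxHeartbeats 4000000 in
/-- Lemma 3.9: the natural transformation `μ_{V,W}` — which vanishes on
`(g⊗v)⊗(g'⊗w)` for `g⁻¹g' ∉ H` and satisfies
`μ((g⊗v_d)⊗(g⊗w_f)) = γ(g)(d,f)⁻¹ g⊗(v_d⊗w_f)` — together with the unit
`1 ↦ ∑ᵢ gᵢ⊗1` (sum over left coset representatives of `H` in `G`) equips the induction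
functor `I : Z(Vect_H^ω) → Z(Vect_G^ω)` with a lax monoidal structure: each `μ_{V,W}` is a
morphism of twisted Yetter–Drinfeld modules over `(G,ω)` and the lax associativity and
unitality coherence conditions hold. -/
theorem induction_lax {k : Type*} [Field k] [IsAlgClosed k] {G : Type*} [Group G]
    [Finite G] [DecidableEq G] (ω : G → G → G → kˣ)
    (hω : IsCocycle ω) (hnorm : IsNormalized ω) (H : Subgroup G) :
    -- μ_{V,W} is a morphism of twisted Yetter–Drinfeld modules over (G, ω)
    (∀ (V W : Type) [AddCommGroup V] [Module k V] [AddCommGroup W] [Module k W]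
        (SV : YDOn k (resCocycle ω H) V) (SW : YDOn k (resCocycle ω H) W)
        (SVW : YDOn k (resCocycle ω H) (V ⊗[k] W)), IsTensorStruct SV SW SVW →
      ∀ (TV : YDOn k ω (IndCarrier ω H SV)) (TW : YDOn k ω (IndCarrier ω H SW))
        (TVW : YDOn k ω (IndCarrier ω H SVW)),
        IsIndStruct ω H SV TV → IsIndStruct ω H SW TW → IsIndStruct ω H SVW TVW →
      ∀ (Tt : YDOn k ω (IndCarrier ω H SV ⊗[k] IndCarrier ω H SW)),
        IsTensorStruct TV TW Tt →
      ∀ μ : IndCarrier ω H SV ⊗[k] IndCarrier ω H SW →ₗ[k] IndCarrier ω H SVW,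
        IsMuMap ω H SV SW SVW μ → IsYDHom Tt TVW μ) ∧
    -- lax associativity coherence
    (∀ (V W U : Type) [AddCommGroup V] [Module k V] [AddCommGroup W] [Module k W]
        [AddCommGroup U] [Module k U]
        (SV : YDOn k (resCocycle ω H) V) (SW : YDOn k (resCocycle ω H) W)
        (SU : YDOn k (resCocycle ω H) U)
        (SVW : YDOn k (resCocycle ω H) (V ⊗[k] W)) (_ : IsTensorStruct SV SW SVW)
        (SWU : YDOn k (resCocycle ω H) (W ⊗[k] U)) (_ : IsTensorStruct SW SU SWU)
        (SVW_U : YDOn k (resCocycle ω H) ((V ⊗[k] W) ⊗[k] U))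
        (_ : IsTensorStruct SVW SU SVW_U)
        (SV_WU : YDOn k (resCocycle ω H) (V ⊗[k] (W ⊗[k] U)))
        (_ : IsTensorStruct SV SWU SV_WU)
        (αH : (V ⊗[k] W) ⊗[k] U →ₗ[k] V ⊗[k] (W ⊗[k] U)) (_ : IsAssocMap SV SW SU αH)
        (TV : YDOn k ω (IndCarrier ω H SV)) (_ : IsIndStruct ω H SV TV)
        (TW : YDOn k ω (IndCarrier ω H SW)) (_ : IsIndStruct ω H SW TW)
        (TU : YDOn k ω (IndCarrier ω H SU)) (_ : IsIndStruct ω H SU TU)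
        (Iα : IndCarrier ω H SVW_U →ₗ[k] IndCarrier ω H SV_WU)
        (_ : IsIndMap ω H SVW_U SV_WU αH Iα)
        (μ₁ : IndCarrier ω H SV ⊗[k] IndCarrier ω H SW →ₗ[k] IndCarrier ω H SVW)
        (_ : IsMuMap ω H SV SW SVW μ₁)
        (μ₂ : IndCarrier ω H SVW ⊗[k] IndCarrier ω H SU →ₗ[k] IndCarrier ω H SVW_U)
        (_ : IsMuMap ω H SVW SU SVW_U μ₂)
        (μ₃ : IndCarrier ω H SW ⊗[k] IndCarrier ω H SU →ₗ[k] IndCarrier ω H SWU)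
        (_ : IsMuMap ω H SW SU SWU μ₃)
        (μ₄ : IndCarrier ω H SV ⊗[k] IndCarrier ω H SWU →ₗ[k] IndCarrier ω H SV_WU)
        (_ : IsMuMap ω H SV SWU SV_WU μ₄)
        (αG : (IndCarrier ω H SV ⊗[k] IndCarrier ω H SW) ⊗[k] IndCarrier ω H SU →ₗ[k]
            IndCarrier ω H SV ⊗[k] (IndCarrier ω H SW ⊗[k] IndCarrier ω H SU)),
        IsAssocMap TV TW TU αG →
        μ₄ ∘ₗ TensorProduct.map LinearMap.id μ₃ ∘ₗ αG
          = Iα ∘ₗ μ₂ ∘ₗ TensorProduct.map μ₁ LinearMap.id) ∧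
    -- lax unitality coherence (left and right)
    (∀ (V : Type) [AddCommGroup V] [Module k V]
        (SV : YDOn k (resCocycle ω H) V)
        (S1 : YDOn k (resCocycle ω H) k) (_ : IsUnitStruct S1)
        (R : Finset G) (η : k →ₗ[k] IndCarrier ω H S1) (_ : IsUnitMap ω H S1 R η)
        (S1V : YDOn k (resCocycle ω H) (k ⊗[k] V)) (_ : IsTensorStruct S1 SV S1V)
        (SV1 : YDOn k (resCocycle ω H) (V ⊗[k] k)) (_ : IsTensorStruct SV S1 SV1)
        (Ilam : IndCarrier ω H S1V →ₗ[k] IndCarrier ω H SV)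
        (_ : IsIndMap ω H S1V SV (TensorProduct.lid k V).toLinearMap Ilam)
        (Irho : IndCarrier ω H SV1 →ₗ[k] IndCarrier ω H SV)
        (_ : IsIndMap ω H SV1 SV (TensorProduct.rid k V).toLinearMap Irho)
        (μl : IndCarrier ω H S1 ⊗[k] IndCarrier ω H SV →ₗ[k] IndCarrier ω H S1V)
        (_ : IsMuMap ω H S1 SV S1V μl)
        (μr : IndCarrier ω H SV ⊗[k] IndCarrier ω H S1 →ₗ[k] IndCarrier ω H SV1),
        IsMuMap ω H SV S1 SV1 μr →
        Ilam ∘ₗ μl ∘ₗ TensorProduct.map η LinearMap.id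
          = (TensorProduct.lid k (IndCarrier ω H SV)).toLinearMap ∧
        Irho ∘ₗ μr ∘ₗ TensorProduct.map LinearMap.id η
          = (TensorProduct.rid k (IndCarrier ω H SV)).toLinearMap) := by
  refine ⟨?_, ?_, ?_⟩
  · -- μ is a morphism of twisted Yetter–Drinfeld modules
    intro V W _ _ _ _ SV SW SVW hSVW TV TW TVW hTV hTW hTVW Tt hTt μ hμ
    constructor
    · -- grading component
      intro dG x hx
      rw [hTt.1] at hx
      have hle : (⨆ a : G, Submodule.map₂ (TensorProduct.mk k (IndCarrier ω H SV)
            (IndCarrier ω H SW)) (TV.grading a) (TW.grading (a⁻¹ * dG)))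
          ≤ Submodule.comap μ (TVW.grading dG) := by
        refine iSup_le fun a => Submodule.map₂_le.mpr ?_
        intro x hxa y hya
        rw [hTV.1] at hxa
        rw [hTW.1] at hya
        induction hxa using Submodule.span_induction with
        | mem x hx' =>
          induction hya using Submodule.span_induction with
          | mem y hy' =>
            obtain ⟨g, e, v, hv, hdeg1, rfl⟩ := hx'
            obtain ⟨g', f, w, hw, hdeg2, rfl⟩ := hy'
            simp only [Submodule.mem_comap, TensorProduct.mk_apply]
            by_cases hH : g⁻¹ * g' ∈ H
            · obtain ⟨h, hh⟩ : ∃ h : ↥H, g' = g * ↑h :=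
                ⟨⟨g⁻¹ * g', hH⟩, by show g' = g * (g⁻¹ * g'); group⟩
              rw [hh, jgen_rel ω H SW g h f hw]
              rw [TensorProduct.tmul_smul, map_smul]
              refine Submodule.smul_mem _ _ ?_
              rw [hμ.2 g e (h * f * h⁻¹) v (SW.act h w) hv (SW.act_mem _ f w hw)]
              refine Submodule.smul_mem _ _ ?_
              have hmem := jgen_mem_grading ω H hTVW g (e * (h * f * h⁻¹))
                (tmul_mem_tensorStruct hSVW hv (SW.act_mem _ f w hw))
              have hidx : g * ↑(e * (h * f * h⁻¹)) * g⁻¹ = dG := by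
                have hd : dG = (g * ↑e * g⁻¹) * (g' * ↑f * g'⁻¹) := by
                  rw [hdeg1, hdeg2]; group
                rw [hd, hh]
                push_cast
                group
              rwa [hidx] at hmem
            · rw [hμ.1 g g' hH v w]
              exact zero_mem _
          | zero =>
            simp only [map_zero]
            exact zero_mem _
          | add a b _ _ iha ihb =>
            simp only [map_add]
            exact add_mem iha ihb
          | smul c a _ ih =>
            simp only [map_smul]
            exact Submodule.smul_mem _ _ ih
        | zero =>
          simp only [map_zero, LinearMap.zero_apply]
          exact zero_mem _
        | add a b _ _ iha ihb =>
          simp only [map_add, LinearMap.add_apply]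
          exact add_mem iha ihb
        | smul c a _ ih =>
          simp only [map_smul, LinearMap.smul_apply]
          exact Submodule.smul_mem _ _ ih
      exact hle hx
    · -- equivariance component
      intro c
      have key : ∀ (g : G) (e f : ↥H) (v : V) (w : W), v ∈ SV.grading e → w ∈ SW.grading f →
          μ (Tt.act c (jgen ω H SV g v ⊗ₜ[k] jgen ω H SW g w))
            = TVW.act c (μ (jgen ω H SV g v ⊗ₜ[k] jgen ω H SW g w)) := by
        intro g e f v w hv hw
        rw [hTt.2 c (g * ↑e * g⁻¹) (g * ↑f * g⁻¹) _ _ (jgen_mem_grading ω H hTV g e hv)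
          (jgen_mem_grading ω H hTW g f hw)]
        rw [hTV.2 c g e v hv, hTW.2 c g f w hw]
        rw [hμ.2 g e f v w hv hw]
        simp only [← TensorProduct.smul_tmul', TensorProduct.tmul_smul, map_smul]
        rw [hμ.2 (c * g) e f v w hv hw]
        rw [hTVW.2 c g (e * f) (v ⊗ₜ[k] w) (tmul_mem_tensorStruct hSVW hv hw)]
        simp only [smul_smul]
        congr 1
        push_cast
        have h2 := I2k (k := k) hω c g (↑e) (↑f)
        push_cast at h2
        linear_combination h2
      apply ext_of_spans (jgen_span ω H SV) (jgen_span ω H SW)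
      rintro x ⟨g, e, v, hv, rfl⟩ y ⟨g', f, w, hw, rfl⟩
      simp only [LinearMap.comp_apply]
      by_cases hH : g⁻¹ * g' ∈ H
      · obtain ⟨h, hh⟩ : ∃ h : ↥H, g' = g * ↑h :=
          ⟨⟨g⁻¹ * g', hH⟩, by show g' = g * (g⁻¹ * g'); group⟩
        rw [hh, jgen_rel ω H SW g h f hw]
        rw [TensorProduct.tmul_smul, map_smul, map_smul, map_smul, map_smul]
        rw [key g e (h * f * h⁻¹) v (SW.act h w) hv (SW.act_mem _ f w hw)]
      · rw [hTt.2 c (g * ↑e * g⁻¹) (g' * ↑f * g'⁻¹) _ _ (jgen_mem_grading ω H hTV g e hv)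
          (jgen_mem_grading ω H hTW g' f hw)]
        rw [hTV.2 c g e v hv, hTW.2 c g' f w hw]
        simp only [← TensorProduct.smul_tmul', TensorProduct.tmul_smul, map_smul]
        have hcH : (c * g)⁻¹ * (c * g') ∉ H := by
          have : (c * g)⁻¹ * (c * g') = g⁻¹ * g' := by group
          rw [this]; exact hH
        rw [hμ.1 (c * g) (c * g') hcH v w, hμ.1 g g' hH v w]
        simp only [smul_zero, map_zero]
  · -- lax associativity coherence
    intro V W U _ _ _ _ _ _ SV SW SU SVW hSVW SWU hSWU SVWU hSVWU SV_WU hSV_WU αH hαH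
      TV hTV TW hTW TU hTU Iα hIα μ₁ hμ₁ μ₂ hμ₂ μ₃ hμ₃ μ₄ hμ₄ αG hαG
    have key : ∀ (g : G) (d e f : ↥H) (v : V) (w : W) (u : U),
        v ∈ SV.grading d → w ∈ SW.grading e → u ∈ SU.grading f →
        (μ₄ ∘ₗ TensorProduct.map LinearMap.id μ₃ ∘ₗ αG)
            ((jgen ω H SV g v ⊗ₜ[k] jgen ω H SW g w) ⊗ₜ[k] jgen ω H SU g u)
          = (Iα ∘ₗ μ₂ ∘ₗ TensorProduct.map μ₁ LinearMap.id)
            ((jgen ω H SV g v ⊗ₜ[k] jgen ω H SW g w) ⊗ₜ[k] jgen ω H SU g u) := by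
      intro g d e f v w u hv hw hu
      simp only [LinearMap.comp_apply]
      rw [hαG _ _ _ _ _ _ (jgen_mem_grading ω H hTV g d hv) (jgen_mem_grading ω H hTW g e hw)
        (jgen_mem_grading ω H hTU g f hu)]
      simp only [map_smul, TensorProduct.map_tmul, LinearMap.id_coe, id_eq]
      rw [hμ₃.2 g e f w u hw hu]
      rw [TensorProduct.tmul_smul, map_smul]
      rw [hμ₄.2 g d (e * f) v (w ⊗ₜ[k] u) hv (tmul_mem_tensorStruct hSWU hw hu)]
      rw [hμ₁.2 g d e v w hv hw]
      simp only [← TensorProduct.smul_tmul', map_smul]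
      rw [hμ₂.2 g (d * e) f (v ⊗ₜ[k] w) u (tmul_mem_tensorStruct hSVW hv hw) hu]
      simp only [map_smul]
      rw [hIα g ((v ⊗ₜ[k] w) ⊗ₜ[k] u)]
      rw [hαH d e f v w u hv hw hu]
      rw [jgen_smul]
      simp only [smul_smul]
      congr 1
      simp only [resCocycle]
      push_cast
      have h3 := I3k (k := k) hω g (↑d) (↑e) (↑f)
      push_cast at h3
      linear_combination h3
    apply ext_of_spans (span_tmul_top (jgen_span ω H SV) (jgen_span ω H SW)) (jgen_span ω H SU)
    rintro z ⟨x, ⟨g1, d, v, hv, rfl⟩, y, ⟨g2, e, w, hw, rfl⟩, rfl⟩ zu ⟨g3, f, u, hu, rfl⟩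
    by_cases h12 : g1⁻¹ * g2 ∈ H
    · by_cases h23 : g2⁻¹ * g3 ∈ H
      · obtain ⟨h2, hh2⟩ : ∃ h : ↥H, g2 = g1 * ↑h :=
          ⟨⟨g1⁻¹ * g2, h12⟩, by show g2 = g1 * (g1⁻¹ * g2); group⟩
        have h13 : g1⁻¹ * g3 ∈ H := by
          have heq : g1⁻¹ * g3 = (g1⁻¹ * g2) * (g2⁻¹ * g3) := by group
          rw [heq]; exact mul_mem h12 h23
        obtain ⟨h3, hh3⟩ : ∃ h : ↥H, g3 = g1 * ↑h :=
          ⟨⟨g1⁻¹ * g3, h13⟩, by show g3 = g1 * (g1⁻¹ * g3); group⟩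
        rw [hh2, hh3, jgen_rel ω H SW g1 h2 e hw, jgen_rel ω H SU g1 h3 f hu]
        simp only [TensorProduct.tmul_smul, ← TensorProduct.smul_tmul', map_smul]
        rw [key g1 d (h2 * e * h2⁻¹) (h3 * f * h3⁻¹) v _ _ hv (SW.act_mem _ e w hw)
          (SU.act_mem _ f u hu)]
      · -- w, u lie in different cosets : both sides vanish
        simp only [LinearMap.comp_apply]
        rw [hαG _ _ _ _ _ _ (jgen_mem_grading ω H hTV g1 d hv)
          (jgen_mem_grading ω H hTW g2 e hw) (jgen_mem_grading ω H hTU g3 f hu)]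
        simp only [map_smul, TensorProduct.map_tmul, LinearMap.id_coe, id_eq]
        rw [hμ₃.1 g2 g3 h23 w u]
        simp only [TensorProduct.tmul_zero, map_zero, smul_zero]
        obtain ⟨h2, hh2⟩ : ∃ h : ↥H, g2 = g1 * ↑h :=
          ⟨⟨g1⁻¹ * g2, h12⟩, by show g2 = g1 * (g1⁻¹ * g2); group⟩
        have h13 : g1⁻¹ * g3 ∉ H := by
          intro hmem
          apply h23
          have heq : g2⁻¹ * g3 = (g1⁻¹ * g2)⁻¹ * (g1⁻¹ * g3) := by group
          rw [heq]; exact mul_mem (inv_mem h12) hmem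
        rw [hh2, jgen_rel ω H SW g1 h2 e hw]
        simp only [TensorProduct.tmul_smul, ← TensorProduct.smul_tmul', map_smul]
        rw [hμ₁.2 g1 d (h2 * e * h2⁻¹) v _ hv (SW.act_mem _ e w hw)]
        simp only [← TensorProduct.smul_tmul', map_smul]
        rw [hμ₂.1 g1 g3 h13]
        simp only [map_zero, smul_zero]
    · -- v in a different coset from w : both sides vanish
      have hz : (Iα ∘ₗ μ₂ ∘ₗ TensorProduct.map μ₁ LinearMap.id)
          ((jgen ω H SV g1 v ⊗ₜ[k] jgen ω H SW g2 w) ⊗ₜ[k] jgen ω H SU g3 u) = 0 := by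
        simp only [LinearMap.comp_apply, TensorProduct.map_tmul, LinearMap.id_coe, id_eq]
        rw [hμ₁.1 g1 g2 h12 v w]
        simp only [TensorProduct.zero_tmul, map_zero]
      rw [hz]
      simp only [LinearMap.comp_apply]
      rw [hαG _ _ _ _ _ _ (jgen_mem_grading ω H hTV g1 d hv)
        (jgen_mem_grading ω H hTW g2 e hw) (jgen_mem_grading ω H hTU g3 f hu)]
      simp only [map_smul, TensorProduct.map_tmul, LinearMap.id_coe, id_eq]
      by_cases h23 : g2⁻¹ * g3 ∈ H
      · obtain ⟨h3, hh3⟩ : ∃ h : ↥H, g3 = g2 * ↑h :=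
          ⟨⟨g2⁻¹ * g3, h23⟩, by show g3 = g2 * (g2⁻¹ * g3); group⟩
        rw [hh3, jgen_rel ω H SU g2 h3 f hu]
        simp only [TensorProduct.tmul_smul, map_smul]
        rw [hμ₃.2 g2 e (h3 * f * h3⁻¹) w _ hw (SU.act_mem _ f u hu)]
        simp only [map_smul, TensorProduct.tmul_smul]
        rw [hμ₄.1 g1 g2 h12]
        simp only [smul_zero]
      · rw [hμ₃.1 g2 g3 h23 w u]
        simp only [TensorProduct.tmul_zero, map_zero, smul_zero]
  · -- lax unitality coherence
    intro V _ _ SV S1 hS1 R η hη S1V hS1V SV1 hSV1 Ilam hIlam Irho hIrho μl hμl μr hμr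
    obtain ⟨hR, hη1⟩ := hη
    have hs1 : Submodule.span k {(1 : k)} = ⊤ := by
      rw [eq_top_iff]
      rintro x -
      rw [Submodule.mem_span_singleton]
      exact ⟨x, by simp⟩
    have hone : ∀ e : ↥H, (1 : k) ∈ S1.grading e → True := fun _ _ => trivial
    constructor
    · -- left unitality
      apply ext_of_spans hs1 (jgen_span ω H SV)
      rintro x hx y ⟨g, e, v, hv, rfl⟩
      rcases hx with rfl
      obtain ⟨r0, ⟨hr0R, hr0H⟩, huniq⟩ := hR g
      have hr0H' : r0⁻¹ * g ∈ H := by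
        have := inv_mem hr0H; rwa [mul_inv_rev, inv_inv] at this
      obtain ⟨h0, hh0⟩ : ∃ h : ↥H, g = r0 * ↑h :=
        ⟨⟨r0⁻¹ * g, hr0H'⟩, by show g = r0 * (r0⁻¹ * g); group⟩
      simp only [LinearMap.comp_apply, TensorProduct.map_tmul, LinearMap.id_coe, id_eq, hη1]
      rw [TensorProduct.sum_tmul, map_sum, map_sum]
      have hside : ∀ r ∈ R, r ≠ r0 →
          Ilam (μl (jgen ω H S1 r (1 : k) ⊗ₜ[k] jgen ω H SV g v)) = 0 := by
        intro r hrR hrne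
        have hnot : r⁻¹ * g ∉ H := by
          intro hmem
          refine hrne (huniq r ⟨hrR, ?_⟩)
          have := inv_mem hmem; rwa [mul_inv_rev, inv_inv] at this
        rw [hμl.1 r g hnot, map_zero]
      rw [Finset.sum_eq_single r0 hside (fun habs => absurd hr0R habs)]
      rw [hh0, jgen_rel ω H SV r0 h0 e hv]
      rw [TensorProduct.tmul_smul, map_smul, map_smul]
      rw [hμl.2 r0 1 (h0 * e * h0⁻¹) (1 : k) (SV.act h0 v) (by rw [hS1.1]; trivial)
        (SV.act_mem _ e v hv)]
      have hg1 : gamc ω r0 ↑(1 : ↥H) ↑(h0 * e * h0⁻¹) = 1 := by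
        rw [OneMemClass.coe_one]; exact norm_gamc_left hnorm _ _
      rw [hg1, map_smul, hIlam r0 ((1 : k) ⊗ₜ[k] SV.act h0 v)]
      simp only [inv_one, Units.val_one, one_smul, LinearEquiv.coe_coe, TensorProduct.lid_tmul,
        TensorProduct.tmul_smul, map_smul]
    · -- right unitality
      apply ext_of_spans (jgen_span ω H SV) hs1
      rintro x ⟨g, e, v, hv, rfl⟩ y hy
      rcases hy with rfl
      obtain ⟨r0, ⟨hr0R, hr0H⟩, huniq⟩ := hR g
      obtain ⟨h0, hh0⟩ : ∃ h : ↥H, r0 = g * ↑h :=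
        ⟨⟨g⁻¹ * r0, hr0H⟩, by show r0 = g * (g⁻¹ * r0); group⟩
      simp only [LinearMap.comp_apply, TensorProduct.map_tmul, LinearMap.id_coe, id_eq, hη1]
      rw [TensorProduct.tmul_sum, map_sum, map_sum]
      have hside : ∀ r ∈ R, r ≠ r0 →
          Irho (μr (jgen ω H SV g v ⊗ₜ[k] jgen ω H S1 r (1 : k))) = 0 := by
        intro r hrR hrne
        have hnot : g⁻¹ * r ∉ H := fun hmem => hrne (huniq r ⟨hrR, hmem⟩)
        rw [hμr.1 g r hnot, map_zero]
      rw [Finset.sum_eq_single r0 hside (fun habs => absurd hr0R habs)]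
      rw [hh0, jgen_rel ω H S1 g h0 1 (show (1 : k) ∈ S1.grading 1 by rw [hS1.1]; trivial)]
      have ht1 : tauc ω g ↑h0 ↑(1 : ↥H) = 1 := by
        rw [OneMemClass.coe_one]; exact norm_tauc_right hnorm _ _
      rw [ht1, hS1.2.2 h0]
      simp only [inv_one, Units.val_one, one_smul, LinearMap.id_apply]
      rw [hμr.2 g e 1 v (1 : k) hv (by rw [hS1.1]; trivial)]
      have hg1 : gamc ω g ↑e ↑(1 : ↥H) = 1 := by
        rw [OneMemClass.coe_one]; exact norm_gamc_right hnorm _ _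
      rw [hg1, map_smul, hIrho g (v ⊗ₜ[k] (1 : k))]
      simp only [inv_one, Units.val_one, one_smul, LinearEquiv.coe_coe, TensorProduct.rid_tmul]
end
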